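/- arXiv:2503.20529 — 8 statements merged into one kernel-verified Lean document; each statement's English description precedes it below -/
import Mathlib

section
/- If for some integer k > 1, some real β ∈ (1, k) and some ω > 0 the inequality β(1 + ω) ≤ k holds, then in the (β, ω, k)-blocking game on the infinite k-ary tree, Bob has a winning strategy: there is a strategy producing an infinite path that never enters a forbidden vertex, no matter how Alice plays. -/
open scoped BigOperators

namespace BobWins

variable {k : ℕ}

/-- Weight of a forbidden vertex `v` (from round `m`), measured relative to history `h`. -/
noncomputable def f (β : ℝ) (A : List (Fin k) → Set (List (Fin k)))
    (m : ℕ) (h : List (Fin k)) : ℝ :=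
  ∑' v : A (h.take m),
    if h <+: (v : List (Fin k)) then
      β ^ (-(((v : List (Fin k)).length : ℤ) - (h.length : ℤ))) else 0

/-- Total threat potential at history `h`. -/
noncomputable def Phi (β : ℝ) (A : List (Fin k) → Set (List (Fin k)))
    (h : List (Fin k)) : ℝ :=
  ∑ m ∈ Finset.range h.length, f β A m h

lemma summable_f {β : ℝ} (hβ : 0 < β) {A : List (Fin k) → Set (List (Fin k))}
    (hsumm : ∀ h, Summable (fun v : A h =>
      β ^ (-(((v : List (Fin k)).length : ℤ) - (h.length : ℤ)))))
    {m : ℕ} (h : List (Fin k)) :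
    Summable (fun v : A (h.take m) =>
      if h <+: (v : List (Fin k)) then
        β ^ (-(((v : List (Fin k)).length : ℤ) - (h.length : ℤ))) else 0) := by
  apply Summable.of_nonneg_of_le (f := fun v : A (h.take m) =>
    β ^ ((h.length : ℤ) - ((h.take m).length : ℤ)) *
      β ^ (-(((v : List (Fin k)).length : ℤ) - ((h.take m).length : ℤ))))
  · intro v; positivity
  · intro v
    by_cases hv : h <+: (v : List (Fin k))
    · rw [if_pos hv, ← zpow_add₀ (ne_of_gt hβ)]
      apply le_of_eq; congr 1; ring
    · rw [if_neg hv]; positivity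
  · exact (hsumm (h.take m)).mul_left _

lemma f_nonneg {β : ℝ} (hβ : 0 < β) (A : List (Fin k) → Set (List (Fin k)))
    (m : ℕ) (h : List (Fin k)) : 0 ≤ f β A m h := by
  apply tsum_nonneg
  intro v
  split <;> positivity

lemma sum_children_pointwise {β : ℝ} (hβ : 0 < β) (h v : List (Fin k)) :
    ∑ c : Fin k,
      (if h ++ [c] <+: v then β ^ (-((v.length : ℤ) - (((h ++ [c]).length : ℕ) : ℤ))) else 0)
      ≤ β * (if h <+: v then β ^ (-((v.length : ℤ) - (h.length : ℤ))) else 0) := by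
  by_cases hex : ∃ c : Fin k, h ++ [c] <+: v
  · obtain ⟨c₀, hc₀⟩ := hex
    have hv : h <+: v := (List.prefix_append h [c₀]).trans hc₀
    have huniq : ∀ c : Fin k, h ++ [c] <+: v → c = c₀ := by
      intro c hc
      have h1 : h ++ [c] <+: h ++ [c₀] :=
        List.prefix_of_prefix_length_le hc hc₀ (by simp)
      have h2 : h ++ [c] = h ++ [c₀] := h1.eq_of_length (by simp)
      simpa using List.append_cancel_left h2
    have hval : ∀ c : Fin k,
        (if h ++ [c] <+: v then β ^ (-((v.length : ℤ) - (((h ++ [c]).length : ℕ) : ℤ))) else 0)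
        = (if c = c₀ then β ^ (-((v.length : ℤ) - ((h.length : ℤ) + 1))) else 0) := by
      intro c
      by_cases hc : c = c₀
      · subst hc
        rw [if_pos hc₀, if_pos rfl]
        congr 1
        push_cast [List.length_append, List.length_singleton]
        ring
      · rw [if_neg (fun hp => hc (huniq c hp)), if_neg hc]
    rw [Finset.sum_congr rfl (fun c _ => hval c), Finset.sum_ite_eq' Finset.univ c₀,
      if_pos (Finset.mem_univ c₀), if_pos hv, ← zpow_one_add₀ (ne_of_gt hβ)]
    apply le_of_eq; congr 1; ring
  · push_neg at hex
    have hz : ∀ c : Fin k,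
        (if h ++ [c] <+: v then β ^ (-((v.length : ℤ) - (((h ++ [c]).length : ℕ) : ℤ))) else 0) = 0 :=
      fun c => if_neg (hex c)
    rw [Finset.sum_congr rfl (fun c _ => hz c), Finset.sum_const, smul_zero]
    split <;> positivity

lemma sum_children_f {β : ℝ} (hβ : 0 < β) {A : List (Fin k) → Set (List (Fin k))}
    (hsumm : ∀ h, Summable (fun v : A h =>
      β ^ (-(((v : List (Fin k)).length : ℤ) - (h.length : ℤ)))))
    {m : ℕ} {h : List (Fin k)} (hm : m ≤ h.length) :
    ∑ c : Fin k, f β A m (h ++ [c]) ≤ β * f β A m h := by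
  have hsc : ∀ c : Fin k, Summable (fun v : A (h.take m) =>
      if h ++ [c] <+: (v : List (Fin k)) then
        β ^ (-(((v : List (Fin k)).length : ℤ) - (((h ++ [c]).length : ℕ) : ℤ))) else 0) := by
    intro c
    have := summable_f hβ hsumm (m := m) (h ++ [c])
    rwa [List.take_append_of_le_length hm] at this
  have hrw : ∀ c : Fin k, f β A m (h ++ [c]) =
      ∑' v : A (h.take m),
        (if h ++ [c] <+: (v : List (Fin k)) then
          β ^ (-(((v : List (Fin k)).length : ℤ) - (((h ++ [c]).length : ℕ) : ℤ))) else 0) := by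
    intro c
    unfold f
    rw [List.take_append_of_le_length hm]
  calc ∑ c : Fin k, f β A m (h ++ [c])
      = ∑ c : Fin k, ∑' v : A (h.take m),
          (if h ++ [c] <+: (v : List (Fin k)) then
            β ^ (-(((v : List (Fin k)).length : ℤ) - (((h ++ [c]).length : ℕ) : ℤ))) else 0) :=
        Finset.sum_congr rfl (fun c _ => hrw c)
    _ = ∑' v : A (h.take m), ∑ c : Fin k,
          (if h ++ [c] <+: (v : List (Fin k)) then
            β ^ (-(((v : List (Fin k)).length : ℤ) - (((h ++ [c]).length : ℕ) : ℤ))) else 0) :=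
        (Summable.tsum_finsetSum (fun c _ => hsc c)).symm
    _ ≤ ∑' v : A (h.take m),
          β * (if h <+: (v : List (Fin k)) then
            β ^ (-(((v : List (Fin k)).length : ℤ) - (h.length : ℤ))) else 0) := by
        apply Summable.tsum_le_tsum
        · intro v
          exact sum_children_pointwise hβ h (v : List (Fin k))
        · exact summable_sum (fun c _ => hsc c)
        · exact (summable_f hβ hsumm h).mul_left β
    _ = β * f β A m h := tsum_mul_left

lemma f_top_le {β ω : ℝ} (hβ : 0 < β) {A : List (Fin k) → Set (List (Fin k))}
    (hsumm : ∀ h, Summable (fun v : A h =>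
      β ^ (-(((v : List (Fin k)).length : ℤ) - (h.length : ℤ)))))
    (hweight : ∀ h, (∑' v : A h,
      β ^ (-(((v : List (Fin k)).length : ℤ) - (h.length : ℤ)))) ≤ ω)
    (h : List (Fin k)) : f β A h.length h ≤ ω := by
  unfold f
  rw [List.take_length]
  refine le_trans (Summable.tsum_le_tsum (fun v => ?_) ?_ (hsumm h)) (hweight h)
  · split
    · exact le_rfl
    · positivity
  · have := summable_f hβ hsumm (m := h.length) h
    rwa [List.take_length] at this

lemma one_le_f {β : ℝ} (hβ : 0 < β) {A : List (Fin k) → Set (List (Fin k))}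
    (hsumm : ∀ h, Summable (fun v : A h =>
      β ^ (-(((v : List (Fin k)).length : ℤ) - (h.length : ℤ)))))
    {m : ℕ} {h : List (Fin k)} (hmem : h ∈ A (h.take m)) :
    1 ≤ f β A m h := by
  have hle := Summable.le_tsum (summable_f hβ hsumm (m := m) h) ⟨h, hmem⟩
    (fun v _ => by split <;> positivity)
  refine le_trans (le_of_eq ?_) hle
  simp

end BobWins

/-- The history of Bob's first `n` moves, as a vertex of the `k`-ary tree. -/
def BobPos {k : ℕ} (pos : ℕ → Fin k) (n : ℕ) : List (Fin k) :=
  List.ofFn (fun i : Fin n => pos i)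

/-- **Theorem (winning strategy in the (β,ω,k)-game).**
If `k > 1`, `β ∈ (1,k)`, `ω > 0` and `β(1+ω) ≤ k`, then against any strategy of
Alice (given by the set `A h` of vertices she newly forbids when Bob's history is `h`,
consisting of proper extensions of `h` of relative weight at most `ω`), Bob has a path
that never enters a forbidden vertex. -/
theorem bob_wins_game (k : ℕ) (hk : 1 < k) (β ω : ℝ)
    (hβ1 : 1 < β) (hβk : β < k) (hω : 0 < ω) (hcond : β * (1 + ω) ≤ k)
    (A : List (Fin k) → Set (List (Fin k)))
    (hlegal : ∀ h v, v ∈ A h → h <+: v ∧ v ≠ h)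
    (hsumm : ∀ h, Summable (fun v : A h =>
      β ^ (-(((v : List (Fin k)).length : ℤ) - (h.length : ℤ)))))
    (hweight : ∀ h, (∑' v : A h,
      β ^ (-(((v : List (Fin k)).length : ℤ) - (h.length : ℤ)))) ≤ ω) :
    ∃ pos : ℕ → Fin k, ∀ m n : ℕ, m ≤ n → BobPos pos n ∉ A (BobPos pos m) := by
  classical
  have hβ0 : (0 : ℝ) < β := lt_trans zero_lt_one hβ1
  have hkβ : (0 : ℝ) < (k : ℝ) - β := sub_pos.2 hβk
  set C : ℝ := β * ω / ((k : ℝ) - β) with hCdef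
  have hC0 : 0 < C := by positivity
  have hC1 : C ≤ 1 := by
    rw [hCdef, div_le_one hkβ]
    nlinarith
  have hkC : β * (C + ω) = (k : ℝ) * C := by
    rw [hCdef]
    field_simp
    ring
  -- key: existence of a good child
  have exists_child : ∀ h : List (Fin k), BobWins.Phi β A h < C →
      ∃ c : Fin k, BobWins.Phi β A (h ++ [c]) < C := by
    intro h hΦ
    have hsum : ∑ c : Fin k, BobWins.Phi β A (h ++ [c]) ≤ β * (BobWins.Phi β A h + ω) := by
      have hexp : ∀ c : Fin k, BobWins.Phi β A (h ++ [c]) =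
          ∑ m ∈ Finset.range (h.length + 1), BobWins.f β A m (h ++ [c]) := by
        intro c
        unfold BobWins.Phi
        rw [List.length_append, List.length_singleton]
      calc ∑ c : Fin k, BobWins.Phi β A (h ++ [c])
          = ∑ m ∈ Finset.range (h.length + 1), ∑ c : Fin k, BobWins.f β A m (h ++ [c]) := by
            rw [Finset.sum_congr rfl (fun c _ => hexp c), Finset.sum_comm]
        _ ≤ ∑ m ∈ Finset.range (h.length + 1), β * BobWins.f β A m h := by
            apply Finset.sum_le_sum
            intro m hmem
            exact BobWins.sum_children_f hβ0 hsumm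
              (Nat.lt_succ_iff.1 (Finset.mem_range.1 hmem))
        _ = β * (BobWins.Phi β A h + BobWins.f β A h.length h) := by
            rw [← Finset.mul_sum, Finset.sum_range_succ]
            rfl
        _ ≤ β * (BobWins.Phi β A h + ω) := by
            have := BobWins.f_top_le hβ0 hsumm hweight h
            nlinarith
    have hlt : ∑ c : Fin k, BobWins.Phi β A (h ++ [c]) < ∑ _c : Fin k, C := by
      rw [Finset.sum_const, Finset.card_univ, Fintype.card_fin, nsmul_eq_mul]
      have h2 : β * (BobWins.Phi β A h + ω) < β * (C + ω) := by nlinarith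
      calc ∑ c : Fin k, BobWins.Phi β A (h ++ [c]) ≤ β * (BobWins.Phi β A h + ω) := hsum
        _ < β * (C + ω) := h2
        _ = (k : ℝ) * C := hkC
    obtain ⟨c, _, hc⟩ := Finset.exists_lt_of_sum_lt hlt
    exact ⟨c, hc⟩
  haveI : Nonempty (Fin k) := ⟨⟨0, by omega⟩⟩
  -- choice of child
  let cf : List (Fin k) → Fin k := fun h =>
    if hP : BobWins.Phi β A h < C then Classical.choose (exists_child h hP)
    else Classical.arbitrary _
  let H : ℕ → List (Fin k) := fun n => Nat.rec ([] : List (Fin k)) (fun _ ih => ih ++ [cf ih]) n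
  have hH0 : H 0 = [] := rfl
  have hHsucc : ∀ n, H (n + 1) = H n ++ [cf (H n)] := fun n => rfl
  have hlen : ∀ n, (H n).length = n := by
    intro n
    induction n with
    | zero => rfl
    | succ n ih => rw [hHsucc, List.length_append, List.length_singleton, ih]
  have hΦ : ∀ n, BobWins.Phi β A (H n) < C := by
    intro n
    induction n with
    | zero =>
      have : BobWins.Phi β A (H 0) = 0 := by
        unfold BobWins.Phi
        rw [hH0]
        simp
      rw [this]; exact hC0
    | succ n ih =>
      rw [hHsucc]
      have : cf (H n) = Classical.choose (exists_child (H n) ih) := dif_pos ih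
      rw [this]
      exact Classical.choose_spec (exists_child (H n) ih)
  have htake : ∀ m n : ℕ, m ≤ n → (H n).take m = H m := by
    intro m n hmn
    induction n, hmn using Nat.le_induction with
    | base => exact List.take_of_length_le (by rw [hlen])
    | succ n hmn ih =>
      rw [hHsucc, List.take_append_of_le_length (by rw [hlen]; exact hmn), ih]
  refine ⟨fun n => cf (H n), ?_⟩
  have hBob : ∀ n, BobPos (fun n => cf (H n)) n = H n := by
    intro n
    induction n with
    | zero => rfl
    | succ n ih =>
      show List.ofFn (fun i : Fin (n + 1) => cf (H i)) = H (n + 1)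
      rw [List.ofFn_succ', List.concat_eq_append, hHsucc]
      exact congrArg (fun l => l ++ [cf (H n)]) ih
  intro m n hmn hmem
  rw [hBob, hBob] at hmem
  rcases eq_or_lt_of_le hmn with heq | hlt
  · subst heq
    exact (hlegal (H m) (H m) hmem).2 rfl
  · rw [← htake m n (le_of_lt hlt)] at hmem
    have h1 : 1 ≤ BobWins.f β A m (H n) := BobWins.one_le_f hβ0 hsumm hmem
    have h2 : BobWins.f β A m (H n) ≤ BobWins.Phi β A (H n) := by
      apply Finset.single_le_sum (f := fun m => BobWins.f β A m (H n))
      · intro i _; exact BobWins.f_nonneg hβ0 A i (H n)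
      · rw [Finset.mem_range, hlen]; exact hlt
    have := hΦ n
    linarith
end

section
/- In the (β, ω, k)-game with β(1+ω) ≤ k, Bob can maintain the following invariant: after each of his moves, the total weight of forbidden vertices in the subtree rooted at his current position is strictly less than 1. Concretely: if S is a set of vertices in the k-ary tree of total weight less than 1 + ω (with weight β^{-l} at depth l) not containing the root, then there exists a child c of the root such that the total weight, measured from c (i.e., multiplied by β), of the vertices of S lying in the subtree of c is less than 1, provided β(1+ω) ≤ k. -/
lemma prefix_singleton_iff_headI {k : ℕ} [NeZero k] (v : List (Fin k)) (hv : v ≠ [])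
    (c : Fin k) : [c] <+: v ↔ v.headI = c := by
  cases v with
  | nil => exact absurd rfl hv
  | cons a t => simp [List.cons_prefix_cons, eq_comm]

def subtreeEquiv (k : ℕ) [NeZero k] (S : Set (List (Fin k))) (hroot : [] ∉ S) (c : Fin k) :
    ((fun v : S => (v : List (Fin k)).headI) ⁻¹' {c})
      ≃ {v : List (Fin k) // v ∈ S ∧ [c] <+: v} where
  toFun v := ⟨v.1.1, v.1.2,
    (prefix_singleton_iff_headI _ (fun h => hroot (h ▸ v.1.2)) c).mpr v.2⟩
  invFun v := ⟨⟨v.1, v.2.1⟩,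
    (prefix_singleton_iff_headI _ (fun h => hroot (h ▸ v.2.1)) c).mp v.2.2⟩
  left_inv v := rfl
  right_inv v := rfl

/-- **Invariant step of Bob's strategy.**
If `S` is a set of vertices of the `k`-ary tree (vertices are words over `Fin k`,
the root is `[]`, a vertex at depth `l` has weight `β^{-l}`), `[] ∉ S`, and the total
weight of `S` is less than `1 + ω`, where `β(1+ω) ≤ k`, then some child `c` of the root
is such that the total weight of the part of `S` lying in the subtree of `c`, measured
from `c` (i.e. multiplied by `β`), is less than `1`. -/
theorem exists_good_child (k : ℕ) (hk : 1 < k) (β ω : ℝ)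
    (hβ1 : 1 < β) (hβk : β < k) (hω : 0 < ω) (hcond : β * (1 + ω) ≤ k)
    (S : Set (List (Fin k))) (hroot : [] ∉ S)
    (hsumm : Summable (fun v : S => β ^ (-((v : List (Fin k)).length : ℤ))))
    (hweight : (∑' v : S, β ^ (-((v : List (Fin k)).length : ℤ))) < 1 + ω) :
    ∃ c : Fin k,
      (∑' v : {v : List (Fin k) // v ∈ S ∧ [c] <+: v},
        β ^ (-(((v : List (Fin k)).length : ℤ) - 1))) < 1 := by
  haveI : NeZero k := ⟨by omega⟩
  have hβ0 : (0:ℝ) < β := lt_trans one_pos hβ1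
  set g : S → Fin k := fun v => (v : List (Fin k)).headI with hg
  -- equivalence between fibers and subtree subtypes
  have e : ∀ c : Fin k,
      (g ⁻¹' {c}) ≃ {v : List (Fin k) // v ∈ S ∧ [c] <+: v} :=
    subtreeEquiv k S hroot
  set f : Fin k → ℝ := fun c => ∑' v : g ⁻¹' {c}, β ^ (-((v : List (Fin k)).length : ℤ))
    with hf
  have hfib : HasSum f (∑' v : S, β ^ (-((v : List (Fin k)).length : ℤ))) :=
    hsumm.hasSum.tsum_fiberwise g
  have htsum : ∀ c : Fin k,
      (∑' v : {v : List (Fin k) // v ∈ S ∧ [c] <+: v},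
        β ^ (-(((v : List (Fin k)).length : ℤ) - 1))) = β * f c := by
    intro c
    rw [hf]
    rw [← (subtreeEquiv k S hroot c).tsum_eq (fun v => β ^ (-(((v : List (Fin k)).length : ℤ) - 1)))]
    rw [← tsum_mul_left]
    congr 1
    funext v
    have hlen : (((subtreeEquiv k S hroot c) v : List (Fin k)).length) = ((v : List (Fin k)).length) := rfl
    rw [hlen]
    rw [show -((((v : (g ⁻¹' {c})) : List (Fin k)).length : ℤ) - 1)
        = 1 + -(((v : (g ⁻¹' {c})) : List (Fin k)).length : ℤ) by ring,
      zpow_add₀ (ne_of_gt hβ0), zpow_one]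
  by_contra hcon
  push_neg at hcon
  have hall : ∀ c : Fin k, 1 ≤ β * f c := fun c => (htsum c) ▸ hcon c
  have hsum_ge : (k : ℝ) ≤ ∑ c : Fin k, β * f c := by
    calc (k : ℝ) = ∑ _c : Fin k, (1:ℝ) := by simp
    _ ≤ ∑ c : Fin k, β * f c := Finset.sum_le_sum fun c _ => hall c
  have hsum_eq : ∑ c : Fin k, β * f c
      = β * ∑' v : S, β ^ (-((v : List (Fin k)).length : ℤ)) := by
    rw [← Finset.mul_sum, hasSum_fintype f |>.unique hfib]
  have : (k : ℝ) < k :=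
    lt_of_le_of_lt (hsum_ge.trans_eq hsum_eq)
      (lt_of_lt_of_le (by nlinarith) hcond)
  exact lt_irrefl _ this
end

section
/- Let A be a finite alphabet of size k and F a set of nonempty words over A. If there exists β ∈ (1, k) with β(1 + Σ_{f ∈ F} β^{-|f|}) ≤ k, then there exists an infinite sequence over A that contains no word of F as a factor (contiguous substring). -/
attribute [local instance] Classical.propDecidable

namespace MillerAux

variable {A : Type*} [Fintype A] (F : Set (List A))

def Good (w : List A) : Prop := ∀ f ∈ F, ¬ f <:+: w

lemma Good.infix {F : Set (List A)} {w u : List A} (h : Good F w) (hu : u <:+: w) :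
    Good F u := fun f hf hfu => h f hf (hfu.trans hu)

noncomputable def L (A : Type*) [Fintype A] (n : ℕ) : Finset (List A) :=
  Finset.univ.image (fun v : Fin n → A => List.ofFn v)

lemma mem_L {n : ℕ} {w : List A} : w ∈ L A n ↔ w.length = n := by
  simp only [L, Finset.mem_image, Finset.mem_univ, true_and]
  constructor
  · rintro ⟨v, rfl⟩; simp
  · rintro rfl
    exact ⟨w.get, List.ofFn_get w⟩

noncomputable def G (n : ℕ) : Finset (List A) := (L A n).filter (Good F)

lemma mem_G {n : ℕ} {w : List A} : w ∈ G F n ↔ w.length = n ∧ Good F w := by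
  simp [G, mem_L]

noncomputable def B (n : ℕ) : Finset (List A) :=
  (L A n).filter (fun w => Good F w.dropLast ∧ ¬ Good F w)

noncomputable def Fle (n : ℕ) : Finset (List A) :=
  ((Finset.range (n+1)).biUnion (fun m => L A m)).filter (· ∈ F)

lemma mem_Fle {n : ℕ} {f : List A} : f ∈ Fle F n ↔ f.length ≤ n ∧ f ∈ F := by
  simp only [Fle, Finset.mem_filter, Finset.mem_biUnion, Finset.mem_range, mem_L]
  constructor
  · rintro ⟨⟨m, hm, rfl⟩, hf⟩; exact ⟨by omega, hf⟩
  · rintro ⟨h1, h2⟩; exact ⟨⟨f.length, by omega, rfl⟩, h2⟩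

lemma card_step (n : ℕ) :
    Fintype.card A * (G F n).card ≤ (G F (n+1)).card + (B F (n+1)).card := by
  have h := Finset.card_le_card_of_injOn (s := (G F n) ×ˢ (Finset.univ : Finset A))
    (t := G F (n+1) ∪ B F (n+1)) (fun p => p.1 ++ [p.2]) ?_ ?_
  · calc Fintype.card A * (G F n).card = ((G F n) ×ˢ (Finset.univ : Finset A)).card := by
          simp [Finset.card_product, mul_comm]
      _ ≤ (G F (n+1) ∪ B F (n+1)).card := h
      _ ≤ _ := Finset.card_union_le _ _
  · rintro ⟨w, a⟩ hw
    simp only [Finset.mem_coe, Finset.mem_product, Finset.mem_univ, and_true] at hw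
    rw [mem_G] at hw
    have hlen : (w ++ [a]).length = n + 1 := by simp [hw.1]
    by_cases hg : Good F (w ++ [a])
    · exact Finset.mem_union_left _ (by rw [mem_G]; exact ⟨hlen, hg⟩)
    · refine Finset.mem_union_right _ ?_
      simp only [B, Finset.mem_filter, mem_L]
      exact ⟨hlen, by rw [List.dropLast_concat]; exact hw.2, hg⟩
  · rintro ⟨w1, a1⟩ h1 ⟨w2, a2⟩ h2 h
    simp only at h
    rw [← List.concat_eq_append, ← List.concat_eq_append, List.concat_inj] at h
    simp [h.1, h.2]

lemma exists_suffix {w : List A} (hd : Good F w.dropLast) (hw : ¬ Good F w) :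
    ∃ f ∈ F, f <:+ w := by
  simp only [Good, not_forall] at hw
  obtain ⟨f, hf, hinf⟩ := hw
  rw [not_not] at hinf
  obtain ⟨s, t, hst⟩ := hinf
  rcases List.eq_nil_or_concat t with rfl | ⟨t', b, rfl⟩
  · exact ⟨f, hf, ⟨s, by simpa using hst⟩⟩
  · exfalso
    apply hd f hf
    have : w.dropLast = s ++ f ++ t' := by
      rw [← hst, List.concat_eq_append, ← List.append_assoc, List.dropLast_concat]
    rw [this]
    exact ⟨s, t', by simp⟩

noncomputable def badSuf (w : List A) : List A :=
  if h : ∃ f, f ∈ F ∧ f <:+ w then h.choose else []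

lemma badSuf_spec {w : List A} (hd : Good F w.dropLast) (hw : ¬ Good F w) :
    badSuf F w ∈ F ∧ badSuf F w <:+ w := by
  have h : ∃ f, f ∈ F ∧ f <:+ w := by
    obtain ⟨f, hf1, hf2⟩ := exists_suffix F hd hw
    exact ⟨f, hf1, hf2⟩
  rw [badSuf, dif_pos h]
  exact h.choose_spec

lemma mem_B {n : ℕ} {w : List A} :
    w ∈ B F n ↔ w.length = n ∧ Good F w.dropLast ∧ ¬ Good F w := by
  simp [B, mem_L, and_assoc]

lemma card_B (hF : ∀ f ∈ F, f ≠ []) (n : ℕ) :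
    (B F (n+1)).card ≤ ∑ f ∈ Fle F (n+1), (G F (n+1 - f.length)).card := by
  rw [← Finset.card_sigma]
  -- key facts about elements of B
  have key : ∀ w ∈ B F (n+1), badSuf F w ∈ F ∧ 1 ≤ (badSuf F w).length ∧
      (badSuf F w).length ≤ n + 1 ∧
      List.take (n+1 - (badSuf F w).length) w ++ badSuf F w = w ∧
      List.take (n+1 - (badSuf F w).length) w ∈ G F (n+1 - (badSuf F w).length) := by
    intro w hw
    rw [mem_B] at hw
    obtain ⟨hlen, hgd, hng⟩ := hw
    obtain ⟨hmem, hsuf⟩ := badSuf_spec F hgd hng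
    set f := badSuf F w with hfdef
    have hf1 : 1 ≤ f.length := List.length_pos_iff.2 (hF f hmem)
    have hfle : f.length ≤ n + 1 := hlen ▸ hsuf.length_le
    obtain ⟨s, hs⟩ := hsuf
    have hslen : s.length = n + 1 - f.length := by
      have := congrArg List.length hs
      simp at this; omega
    have hstake : s = List.take (n+1 - f.length) w := by
      have : s <+: w := ⟨f, hs⟩
      rw [List.prefix_iff_eq_take] at this
      rw [this, hslen]
    have huf : List.take (n+1 - f.length) w ++ f = w := by rw [← hstake]; exact hs
    refine ⟨hmem, hf1, hfle, huf, ?_⟩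
    rw [mem_G]
    constructor
    · rw [← hstake, hslen]
    · have hpre : List.take (n+1 - f.length) w <+: w.dropLast := by
        rw [List.dropLast_eq_take, hlen]
        simpa using (List.take_prefix_take_left (by omega : n + 1 - f.length ≤ n + 1 - 1) : List.take _ w <+: List.take _ w)
      exact hgd.infix hpre.isInfix
  apply Finset.card_le_card_of_injOn
    (f := fun w => ⟨badSuf F w, List.take (n+1 - (badSuf F w).length) w⟩)
  · intro w hw
    obtain ⟨hmem, hf1, hfle, huf, hG⟩ := key w hw
    rw [Finset.mem_coe, Finset.mem_sigma]
    exact ⟨(mem_Fle F).2 ⟨hfle, hmem⟩, hG⟩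
  · intro w1 hw1 w2 hw2 heq
    obtain ⟨_, _, _, huf1, _⟩ := key w1 (by simpa using hw1)
    obtain ⟨_, _, _, huf2, _⟩ := key w2 (by simpa using hw2)
    simp only [Sigma.mk.inj_iff] at heq
    obtain ⟨h1, h2⟩ := heq
    have h3 : List.take (n + 1 - (badSuf F w1).length) w1
        = List.take (n + 1 - (badSuf F w2).length) w2 := eq_of_heq h2
    rw [← huf1, ← huf2, h3, h1]


lemma step (hF : ∀ f ∈ F, f ≠ []) {β : ℝ} (hβ1 : 1 < β)
    (hsumm : Summable (fun f : F => β ^ (-((f : List A).length : ℤ))))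
    (hcond : β * (1 + ∑' f : F, β ^ (-((f : List A).length : ℤ))) ≤ Fintype.card A) :
    ∀ n : ℕ, β * ((G F n).card : ℝ) ≤ ((G F (n+1)).card : ℝ) := by
  intro n
  induction n using Nat.strong_induction_on with
  | _ n ih =>
  set T := ∑' f : F, β ^ (-((f : List A).length : ℤ)) with hT
  have hβ0 : (0 : ℝ) < β := by linarith
  have hT0 : 0 ≤ T := tsum_nonneg (fun f => by positivity)
  have chain : ∀ d m, m + d ≤ n → β ^ d * ((G F m).card : ℝ) ≤ ((G F (m+d)).card : ℝ) := by
    intro d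
    induction d with
    | zero => intro m _; simp
    | succ d hd =>
      intro m hm
      have h1 : β ^ d * ((G F m).card : ℝ) ≤ ((G F (m+d)).card : ℝ) := hd m (by omega)
      have h2 : β * ((G F (m+d)).card : ℝ) ≤ ((G F (m+d+1)).card : ℝ) := ih (m+d) (by omega)
      calc β ^ (d+1) * ((G F m).card : ℝ) = β * (β ^ d * ((G F m).card : ℝ)) := by ring
        _ ≤ β * ((G F (m+d)).card : ℝ) := mul_le_mul_of_nonneg_left h1 (le_of_lt hβ0)
        _ ≤ ((G F (m+d+1)).card : ℝ) := h2
  have hf_bound : ∀ f ∈ Fle F (n+1), ((G F (n+1 - f.length)).card : ℝ) ≤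
      ((G F n).card : ℝ) * (β * β ^ (-(f.length : ℤ))) := by
    intro f hf
    rw [mem_Fle] at hf
    have hf1 : 1 ≤ f.length := List.length_pos_iff.2 (hF f hf.2)
    have hc := chain (f.length - 1) (n + 1 - f.length) (by omega)
    rw [show n + 1 - f.length + (f.length - 1) = n from by omega] at hc
    have hpow : β * β ^ (-(f.length : ℤ)) = (β ^ (f.length - 1))⁻¹ := by
      rw [zpow_neg, zpow_natCast]
      rw [show f.length = (f.length - 1) + 1 from by omega, pow_succ]
      field_simp
      congr 1
    have hx : (0:ℝ) < β ^ (f.length - 1) := pow_pos hβ0 _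
    rw [hpow, mul_comm ((G F n).card : ℝ), inv_mul_eq_div, le_div_iff₀ hx]
    nlinarith [hc]
  have hsum_le : ∑ f ∈ Fle F (n+1), β ^ (-(f.length : ℤ)) ≤ T := by
    have hsub : ∀ f ∈ Fle F (n+1), f ∈ F := fun f hf => ((mem_Fle F).1 hf).2
    set s : Finset F := (Fle F (n+1)).attach.map
      ⟨fun x => (⟨x.1, hsub x.1 x.2⟩ : F), by intro x y hxy; apply Subtype.ext; have h := congrArg Subtype.val hxy; exact h⟩
      with hs
    have heq : ∑ f ∈ Fle F (n+1), β ^ (-(f.length : ℤ))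
        = ∑ x ∈ s, β ^ (-(((x : List A)).length : ℤ)) := by
      rw [hs, Finset.sum_map]
      exact (Finset.sum_attach _ _).symm
    rw [heq, hT]
    exact Summable.sum_le_tsum s (fun f _ => by positivity) hsumm
  have h1 := card_step F n
  have h2 := card_B F hF n
  have h3 : (∑ f ∈ Fle F (n+1), ((G F (n+1 - f.length)).card : ℝ)) ≤
      ((G F n).card : ℝ) * (β * T) := by
    calc (∑ f ∈ Fle F (n+1), ((G F (n+1 - f.length)).card : ℝ))
        ≤ ∑ f ∈ Fle F (n+1), ((G F n).card : ℝ) * (β * β ^ (-(f.length : ℤ))) :=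
          Finset.sum_le_sum hf_bound
      _ = ((G F n).card : ℝ) * (β * ∑ f ∈ Fle F (n+1), β ^ (-(f.length : ℤ))) := by
          rw [Finset.mul_sum, Finset.mul_sum]
      _ ≤ ((G F n).card : ℝ) * (β * T) := by
          apply mul_le_mul_of_nonneg_left _ (Nat.cast_nonneg _)
          exact mul_le_mul_of_nonneg_left hsum_le (le_of_lt hβ0)
  have h1' : (Fintype.card A : ℝ) * ((G F n).card : ℝ) ≤
      ((G F (n+1)).card : ℝ) + ((B F (n+1)).card : ℝ) := by exact_mod_cast h1
  have h2' : ((B F (n+1)).card : ℝ) ≤ ∑ f ∈ Fle F (n+1), ((G F (n+1 - f.length)).card : ℝ) := by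
    exact_mod_cast h2
  have hgn : (0:ℝ) ≤ ((G F n).card : ℝ) := Nat.cast_nonneg _
  nlinarith [h1', h2', h3, hcond, hgn]

lemma G_pos (hF : ∀ f ∈ F, f ≠ []) {β : ℝ} (hβ1 : 1 < β)
    (hsumm : Summable (fun f : F => β ^ (-((f : List A).length : ℤ))))
    (hcond : β * (1 + ∑' f : F, β ^ (-((f : List A).length : ℤ))) ≤ Fintype.card A) :
    ∀ n : ℕ, ∃ w, w ∈ G F n := by
  have pos : ∀ n, 0 < (G F n).card := by
    intro n
    induction n with
    | zero =>
      apply Finset.card_pos.2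
      refine ⟨[], (mem_G F).2 ⟨rfl, ?_⟩⟩
      intro f hf hinf
      exact hF f hf (List.sublist_nil.1 hinf.sublist)
    | succ n ihn =>
      have h := step F hF hβ1 hsumm hcond n
      have : (0:ℝ) < ((G F (n+1)).card : ℝ) := by
        have : (1:ℝ) ≤ ((G F n).card : ℝ) := by exact_mod_cast ihn
        nlinarith
      exact_mod_cast this
  intro n
  exact Finset.card_pos.1 (pos n)


def Ext (p : List A) : Prop := ∀ n, ∃ w, Good F w ∧ w.length = p.length + n ∧ p <+: w

lemma Ext.good {F : Set (List A)} {p : List A} (h : Ext F p) : Good F p := by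
  obtain ⟨w, hg, _, hpre⟩ := h 0
  exact hg.infix hpre.isInfix

lemma ext_nil (hG : ∀ n, ∃ w, w ∈ G F n) : Ext F ([] : List A) := by
  intro n
  obtain ⟨w, hw⟩ := hG n
  rw [mem_G] at hw
  exact ⟨w, hw.2, by simpa using hw.1, List.nil_prefix⟩

lemma ext_step {p : List A} (hp : Ext F p) : ∃ a : A, Ext F (p ++ [a]) := by
  by_contra h
  push_neg at h
  have h' : ∀ a : A, ∃ n, ¬ ∃ w, Good F w ∧ w.length = (p++[a]).length + n ∧ (p++[a]) <+: w := by
    intro a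
    rcases not_forall.1 (h a) with ⟨n, hn⟩
    exact ⟨n, hn⟩
  choose nf hnf using h'
  set N := Finset.univ.sup nf with hN
  obtain ⟨w, hw1, hw2, hw3⟩ := hp (N + 1)
  obtain ⟨t, rfl⟩ := hw3
  rcases t with _ | ⟨b, t'⟩
  · simp at hw2
  apply hnf b
  have hnfb : nf b ≤ N := Finset.le_sup (Finset.mem_univ b)
  set m := (p ++ [b]).length + nf b with hm
  have hlen1 : (p ++ (b :: t')).length = p.length + t'.length + 1 := by simp; omega
  have hlen2 : (p ++ [b]).length = p.length + 1 := by simp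
  have hmle : m ≤ (p ++ (b :: t')).length := by omega
  refine ⟨(p ++ (b :: t')).take m, hw1.infix (List.take_prefix _ _).isInfix, ?_, ?_⟩
  · rw [List.length_take]; omega
  · have h1 : p ++ [b] = (p ++ (b :: t')).take ((p ++ [b]).length) := by
      have : p ++ [b] <+: p ++ (b :: t') := ⟨t', by simp⟩
      exact List.prefix_iff_eq_take.1 this
    rw [h1]
    exact List.take_prefix_take_left (by omega)

noncomputable def ps (hG : ∀ n, ∃ w, w ∈ G F n) : ℕ → {p : List A // Ext F p}
  | 0 => ⟨[], ext_nil F hG⟩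
  | n+1 => ⟨(ps hG n).1 ++ [(ext_step F (ps hG n).2).choose],
      (ext_step F (ps hG n).2).choose_spec⟩

noncomputable def wseq (hG : ∀ n, ∃ w, w ∈ G F n) : ℕ → A :=
  fun n => (ext_step F (ps F hG n).2).choose

lemma ofFn_eq (hG : ∀ n, ∃ w, w ∈ G F n) :
    ∀ n, (List.ofFn fun j : Fin n => wseq F hG j) = (ps F hG n).1 := by
  intro n
  induction n with
  | zero => simp [ps]
  | succ n ihn =>
    rw [List.ofFn_succ', List.concat_eq_append]
    simp only [Fin.coe_castSucc, Fin.val_last]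
    rw [ihn]
    rfl

lemma good_factor (hG : ∀ n, ∃ w, w ∈ G F n) (i n : ℕ) :
    (List.ofFn fun j : Fin n => wseq F hG (i + j)) ∉ F := by
  intro hmem
  have hfull : Good F (List.ofFn fun j : Fin (i + n) => wseq F hG j) := by
    rw [ofFn_eq]
    exact (ps F hG (i+n)).2.good
  have hsuf : (List.ofFn fun j : Fin n => wseq F hG (i + j)) <:+:
      (List.ofFn fun j : Fin (i+n) => wseq F hG j) := by
    rw [List.ofFn_add]
    have h2 : (List.ofFn fun j : Fin n => wseq F hG ((Fin.natAdd i j) : ℕ))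
        = (List.ofFn fun j : Fin n => wseq F hG (i + j)) := by simp
    rw [← h2]
    exact (List.suffix_append _ _).isInfix
  exact hfull _ hmem hsuf

end MillerAux



/-- **Miller's theorem.** Let `A` be a finite alphabet with `k ≥ 2` letters and `F` a set
of nonempty words over `A`. If there is `β ∈ (1,k)` with
`β (1 + Σ_{f ∈ F} β^{-|f|}) ≤ k`, then there is an infinite sequence over `A`
avoiding all words of `F` as factors. -/
theorem miller {A : Type*} [Fintype A] (F : Set (List A))
    (hF : ∀ f ∈ F, f ≠ []) (β : ℝ)
    (hβ1 : 1 < β) (hβk : β < Fintype.card A)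
    (hsumm : Summable (fun f : F => β ^ (-((f : List A).length : ℤ))))
    (hcond : β * (1 + ∑' f : F, β ^ (-((f : List A).length : ℤ)))
      ≤ Fintype.card A) :
    ∃ w : ℕ → A, ∀ i n : ℕ, (List.ofFn fun j : Fin n => w (i + j)) ∉ F := by
  have hG : ∀ n, ∃ w, w ∈ MillerAux.G F n :=
    MillerAux.G_pos F hF hβ1 hsumm hcond
  exact ⟨MillerAux.wseq F hG, fun i n => MillerAux.good_factor F hG i n⟩
end

section
/- For every function α : ℕ → Finset S assigning to each position a set of exactly 4 letters from a (possibly infinite) alphabet S, there exists an infinite sequence w : ℕ → S with w(i) ∈ α(i) for all i, such that w is square-free: w contains no factor of the form uu for a nonempty word u. -/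
noncomputable section SqAux

variable {S : Type*} (α : ℕ → Finset S)

def SqFreeW (n : ℕ) (f : Fin n → S) : Prop :=
  ∀ i m : ℕ, 0 < m → ∀ h : i + 2*m ≤ n, ∃ j, ∃ hj : j < m,
    f ⟨i + j, by omega⟩ ≠ f ⟨i + m + j, by omega⟩

def allW (n : ℕ) : Finset (Fin n → S) := Fintype.piFinset fun i => α (i : ℕ)

open Classical in
noncomputable def sfW (n : ℕ) : Finset (Fin n → S) :=
  (allW α n).filter (SqFreeW n)

noncomputable def gcnt (n : ℕ) : ℕ := (sfW α n).card

lemma mem_allW {n : ℕ} {f : Fin n → S} : f ∈ allW α n ↔ ∀ i : Fin n, f i ∈ α i := by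
  simp [allW, Fintype.mem_piFinset]

lemma mem_sfW {n : ℕ} {f : Fin n → S} :
    f ∈ sfW α n ↔ (∀ i : Fin n, f i ∈ α i) ∧ SqFreeW n f := by
  classical
  simp [sfW, Finset.mem_filter, mem_allW]

lemma gcnt_zero : gcnt α 0 = 1 := by
  classical
  have : sfW α 0 = {(isEmptyElim : Fin 0 → S)} := by
    ext f
    simp only [mem_sfW α, Finset.mem_singleton]
    constructor
    · intro _; funext i; exact isEmptyElim i
    · rintro rfl
      refine ⟨fun i => isEmptyElim i, fun i m hm h => by omega⟩
  rw [gcnt, this, Finset.card_singleton]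

/-- restriction to the first `N` letters -/
def resW (N : ℕ) (f : Fin (N+1) → S) : Fin N → S := fun i => f i.castSucc

open Classical in
/-- words of length N+1 whose length-N prefix is square-free -/
noncomputable def AW (N : ℕ) : Finset (Fin (N+1) → S) :=
  (allW α (N+1)).filter (fun f => SqFreeW N (resW N f))

lemma fin_congr {n : ℕ} (f : Fin n → S) {a b : ℕ} (h : a = b) (ha : a < n) (hb : b < n) :
    f ⟨a, ha⟩ = f ⟨b, hb⟩ := by subst h; rfl

lemma card_AW (N : ℕ) (hα : (α N).card = 4) : (AW α N).card = 4 * gcnt α N := by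
  classical
  have : (AW α N).card = ((sfW α N) ×ˢ (α N)).card := by
    refine Finset.card_bij' (fun f _ => (resW N f, f (Fin.last N)))
      (fun p _ => (Fin.snoc p.1 p.2 : Fin (N+1) → S)) ?_ ?_ ?_ ?_
    · intro f hf
      rw [AW, Finset.mem_filter, mem_allW] at hf
      rw [Finset.mem_product, mem_sfW]
      exact ⟨⟨fun i => hf.1 i.castSucc, hf.2⟩, hf.1 (Fin.last N)⟩
    · intro p hp
      rw [Finset.mem_product, mem_sfW] at hp
      rw [AW, Finset.mem_filter, mem_allW]
      have hres : resW N (Fin.snoc p.1 p.2) = p.1 := by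
        funext i; exact Fin.snoc_castSucc _ _ _
      refine ⟨?_, by rw [hres]; exact hp.1.2⟩
      intro i
      refine Fin.lastCases ?_ ?_ i
      · show (Fin.snoc p.1 p.2 : Fin (N+1) → S) (Fin.last N) ∈ α ((Fin.last N : Fin (N+1)) : ℕ)
        rw [Fin.snoc_last]; exact hp.2
      · intro k
        show (Fin.snoc p.1 p.2 : Fin (N+1) → S) k.castSucc ∈ α ((k.castSucc : Fin (N+1)) : ℕ)
        rw [Fin.snoc_castSucc]; exact hp.1.1 k
    · intro f _
      funext i
      refine Fin.lastCases ?_ ?_ i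
      · show (Fin.snoc (resW N f) (f (Fin.last N)) : Fin (N+1) → S) (Fin.last N) = f (Fin.last N)
        rw [Fin.snoc_last]
      · intro k
        show (Fin.snoc (resW N f) (f (Fin.last N)) : Fin (N+1) → S) k.castSucc = f k.castSucc
        rw [Fin.snoc_castSucc]; rfl
    · intro p _
      have hres : resW N (Fin.snoc p.1 p.2 : Fin (N+1) → S) = p.1 := by
        funext i; exact Fin.snoc_castSucc _ _ _
      have hlast : (Fin.snoc p.1 p.2 : Fin (N+1) → S) (Fin.last N) = p.2 :=
        Fin.snoc_last _ _
      exact Prod.ext hres hlast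
  rw [this, Finset.card_product, gcnt, hα, Nat.mul_comm]


/-- the suffix of length `2ℓ` is a square -/
def HasSqTail (N ℓ : ℕ) (f : Fin (N+1) → S) : Prop :=
  ∀ j : ℕ, ∀ h : N+1-ℓ+j < N+1, f ⟨N+1-2*ℓ+j, by omega⟩ = f ⟨N+1-ℓ+j, h⟩

open Classical in
lemma card_BW (N ℓ : ℕ) (h1 : 1 ≤ ℓ) (h2 : 2*ℓ ≤ N+1) :
    ((AW α N).filter (HasSqTail N ℓ)).card ≤ gcnt α (N+1-ℓ) := by
  classical
  have hle : N+1-ℓ ≤ N+1 := by omega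
  refine Finset.card_le_card_of_injOn
    (fun f => fun i : Fin (N+1-ℓ) => f (Fin.castLE hle i)) ?_ ?_
  · intro f hf
    rw [Finset.mem_coe, Finset.mem_filter] at hf
    obtain ⟨hfA, _⟩ := hf
    rw [AW, Finset.mem_filter, mem_allW] at hfA
    rw [Finset.mem_coe, mem_sfW]
    constructor
    · intro i; exact hfA.1 (Fin.castLE hle i)
    · intro i m hm h
      have h' : i + 2*m ≤ N := by omega
      obtain ⟨j, hj, hne⟩ := hfA.2 i m hm h'
      exact ⟨j, hj, hne⟩
  · intro f1 hf1 f2 hf2 heq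
    simp only [Finset.coe_filter, Set.mem_setOf_eq] at hf1 hf2
    funext k
    by_cases hk : (k : ℕ) < N+1-ℓ
    · exact congrFun heq ⟨k, hk⟩
    · -- k.val = N+1-ℓ+j with j < ℓ
      set j := (k : ℕ) - (N+1-ℓ) with hjdef
      have hkval : (k : ℕ) = N+1-ℓ+j := by omega
      have hjℓ : j < ℓ := by
        have := k.isLt; omega
      have hb : N+1-ℓ+j < N+1 := by omega
      have hsmall : N+1-2*ℓ+j < N+1-ℓ := by omega
      have e1 : f1 k = f1 ⟨N+1-ℓ+j, hb⟩ := fin_congr f1 hkval k.isLt hb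
      have e2 : f2 k = f2 ⟨N+1-ℓ+j, hb⟩ := fin_congr f2 hkval k.isLt hb
      rw [e1, e2, ← hf1.2 j hb, ← hf2.2 j hb]
      exact congrFun heq ⟨N+1-2*ℓ+j, hsmall⟩


lemma sum_bound_aux (N : ℕ) (IH : ∀ k < N, 2 * gcnt α k ≤ gcnt α (k+1)) :
    ∀ L, 1 ≤ L → L ≤ N →
      (∑ ℓ ∈ Finset.Icc 1 L, gcnt α (N+1-ℓ)) + gcnt α (N+1-L) ≤ 2 * gcnt α N := by
  intro L
  induction L with
  | zero => intro h; omega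
  | succ L ihL =>
    intro _ hLN
    rcases Nat.eq_zero_or_pos L with hL0 | hLpos
    · subst hL0
      simp [Finset.Icc_self]
      omega
    · have hprev := ihL hLpos (by omega)
      rw [Finset.sum_Icc_succ_top (by omega)]
      have hN1 : N+1-(L+1) = N-L := by omega
      have hdouble : 2 * gcnt α (N-L) ≤ gcnt α (N-L+1) := IH (N-L) (by omega)
      have hNL1 : N-L+1 = N+1-L := by omega
      rw [hN1]
      rw [hNL1] at hdouble
      omega

lemma sum_bound (N : ℕ) (IH : ∀ k < N, 2 * gcnt α k ≤ gcnt α (k+1))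
    (L : ℕ) (hLN : L ≤ N) :
    (∑ ℓ ∈ Finset.Icc 1 L, gcnt α (N+1-ℓ)) ≤ 2 * gcnt α N := by
  rcases Nat.eq_zero_or_pos L with hL0 | hLpos
  · subst hL0; simp
  · have := sum_bound_aux α N IH L hLpos hLN
    omega

lemma gcnt_step (hα : ∀ n, (α n).card = 4) :
    ∀ N, 2 * gcnt α N ≤ gcnt α (N+1) := by
  intro N
  induction N using Nat.strong_induction_on with
  | _ N IH =>
  classical
  set L := (N+1)/2 with hLdef
  -- inclusion
  have hsub : AW α N ⊆ (sfW α (N+1)) ∪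
      (Finset.Icc 1 L).biUnion (fun ℓ => (AW α N).filter (HasSqTail N ℓ)) := by
    intro f hf
    have hfA := hf
    rw [AW, Finset.mem_filter, mem_allW] at hfA
    by_cases hsf : SqFreeW (N+1) f
    · exact Finset.mem_union_left _ (by rw [mem_sfW]; exact ⟨hfA.1, hsf⟩)
    · refine Finset.mem_union_right _ ?_
      rw [SqFreeW] at hsf
      push_neg at hsf
      obtain ⟨i, m, hm, h, heq⟩ := hsf
      -- if square fits in prefix N, contradiction
      have hend : i + 2*m = N+1 := by
        by_contra hne
        have h' : i + 2*m ≤ N := by omega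
        obtain ⟨j, hj, hne'⟩ := hfA.2 i m hm h'
        exact hne' (heq j hj)
      rw [Finset.mem_biUnion]
      refine ⟨m, ?_, ?_⟩
      · rw [Finset.mem_Icc]; omega
      · rw [Finset.mem_filter]
        refine ⟨hf, ?_⟩
        intro j hb
        have hjm : j < m := by omega
        have e1 : f ⟨N+1-2*m+j, by omega⟩ = f ⟨i+j, by omega⟩ :=
          fin_congr f (by omega) _ _
        have e2 : f ⟨i+m+j, by omega⟩ = f ⟨N+1-m+j, hb⟩ :=
          fin_congr f (by omega) _ _
        rw [e1, ← e2]
        exact heq j hjm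
  -- counting
  have hA : (AW α N).card = 4 * gcnt α N := card_AW α N (hα N)
  have hcard : (AW α N).card ≤ gcnt α (N+1) +
      ∑ ℓ ∈ Finset.Icc 1 L, ((AW α N).filter (HasSqTail N ℓ)).card := by
    calc (AW α N).card ≤ _ := Finset.card_le_card hsub
    _ ≤ (sfW α (N+1)).card +
        ((Finset.Icc 1 L).biUnion (fun ℓ => (AW α N).filter (HasSqTail N ℓ))).card :=
        Finset.card_union_le _ _
    _ ≤ _ := Nat.add_le_add_left Finset.card_biUnion_le _
  have hsum : ∑ ℓ ∈ Finset.Icc 1 L, ((AW α N).filter (HasSqTail N ℓ)).card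
      ≤ ∑ ℓ ∈ Finset.Icc 1 L, gcnt α (N+1-ℓ) := by
    refine Finset.sum_le_sum ?_
    intro ℓ hℓ
    rw [Finset.mem_Icc] at hℓ
    exact card_BW α N ℓ hℓ.1 (by omega)
  have hLN : L ≤ N := by omega
  have hsum2 := sum_bound α N IH L hLN
  omega

lemma gcnt_pos (hα : ∀ n, (α n).card = 4) (n : ℕ) : 0 < gcnt α n := by
  induction n with
  | zero => rw [gcnt_zero]; norm_num
  | succ n ih =>
    have := gcnt_step α hα n
    omega

end SqAux

theorem squarefree_of_four_list_assignment' {S : Type*} (α : ℕ → Finset S)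
    (hα : ∀ n, (α n).card = 4) :
    ∃ w : ℕ → S, (∀ i, w i ∈ α i) ∧
      ∀ i n : ℕ, 0 < n →
        (List.ofFn fun j : Fin n => w (i + j)) ≠
          (List.ofFn fun j : Fin n => w (i + n + j)) := by
  classical
  have hne : ∀ i, (α i).Nonempty := fun i =>
    Finset.card_pos.mp (by rw [hα i]; norm_num)
  let T : ℕ → Type _ := fun i => {x : S // x ∈ α i}
  letI : ∀ i, TopologicalSpace (T i) := fun _ => ⊥
  haveI hdisc : ∀ i, DiscreteTopology (T i) := fun i => ⟨rfl⟩
  haveI : ∀ i, CompactSpace (T i) := fun i => Finite.compactSpace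
  let X := ∀ i, T i
  haveI : CompactSpace X := @Pi.compactSpace ℕ T _ (fun i => inferInstance)
  let C : ℕ → Set X := fun n =>
    (fun (f : X) (k : Fin n) => f (k : ℕ)) ⁻¹'
      {h : ∀ k : Fin n, T (k : ℕ) | SqFreeW n (fun k => (h k).1)}
  have hC : ∀ n (f : X), f ∈ C n ↔ SqFreeW n (fun k : Fin n => (f (k : ℕ)).1) := by
    intro n f; rfl
  have hclosed : ∀ n, IsClosed (C n) := by
    intro n
    haveI : DiscreteTopology (∀ k : Fin n, T (k : ℕ)) := Pi.discreteTopology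
    have hcont : Continuous (fun (f : X) (k : Fin n) => f (k : ℕ)) :=
      continuous_pi fun k => continuous_apply (k : ℕ)
    exact IsClosed.preimage hcont (isClosed_discrete _)
  have hnested : ∀ n, C (n+1) ⊆ C n := by
    intro n f hf
    rw [hC] at hf ⊢
    intro i m hm h2
    exact hf i m hm (by omega)
  have hnonempty : ∀ n, (C n).Nonempty := by
    intro n
    have hpos : 0 < gcnt α n := gcnt_pos α hα n
    rw [gcnt, Finset.card_pos] at hpos
    obtain ⟨F, hF⟩ := hpos
    rw [mem_sfW] at hF
    refine ⟨fun i => if h : i < n then ⟨F ⟨i, h⟩, hF.1 ⟨i, h⟩⟩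
      else ⟨(hne i).choose, (hne i).choose_spec⟩, ?_⟩
    rw [hC]
    intro i m hm h2
    obtain ⟨j, hj, hneq⟩ := hF.2 i m hm h2
    refine ⟨j, hj, ?_⟩
    have hlt1 : i + j < n := by omega
    have hlt2 : i + m + j < n := by omega
    simp only [dif_pos hlt1, dif_pos hlt2]
    exact hneq
  have hinter : (⋂ n, C n).Nonempty :=
    IsCompact.nonempty_iInter_of_sequence_nonempty_isCompact_isClosed C hnested
      hnonempty ((hclosed 0).isCompact) hclosed
  obtain ⟨f, hf⟩ := hinter
  rw [Set.mem_iInter] at hf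
  refine ⟨fun i => (f i).1, fun i => (f i).2, ?_⟩
  intro i n hn hcontra
  rw [List.ofFn_inj] at hcontra
  have hfC := (hC (i + 2*n) f).mp (hf (i + 2*n))
  obtain ⟨j, hj, hneq⟩ := hfC i n hn (le_refl _)
  exact hneq (congrFun hcontra ⟨j, hj⟩)

/-- **Square-free sequences for 4-list assignments.** For every assignment `α` of a
4-element set of letters to each position, there is a sequence respecting `α` that is
square-free: no factor has the form `uu` with `u` nonempty. -/
theorem squarefree_of_four_list_assignment {S : Type*} (α : ℕ → Finset S)
    (hα : ∀ n, (α n).card = 4) :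
    ∃ w : ℕ → S, (∀ i, w i ∈ α i) ∧
      ∀ i n : ℕ, 0 < n →
        (List.ofFn fun j : Fin n => w (i + j)) ≠
          (List.ofFn fun j : Fin n => w (i + n + j)) :=
  squarefree_of_four_list_assignment' α hα
end

section
/- For every real c with 1 < c < 2 there exist a natural number N and an infinite binary sequence α such that for every binary string x of length n ≥ N, any two occurrences of x in α start at positions whose distance is at least c^n. -/
namespace SepOcc

open Finset

/-- `s` agrees with its shift by `d` on the window `[i, i+n)`. -/
def Bad (s : ℕ → Bool) (i d n : ℕ) : Prop := ∀ t < n, s (i + t) = s (i + d + t)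

/-- Goodness of the first `M` symbols of `s` w.r.t. parameters `c, N`. -/
def GoodN (c : ℝ) (N M : ℕ) (s : ℕ → Bool) : Prop :=
  ∀ i d n : ℕ, N ≤ n → 1 ≤ d → (d : ℝ) < c ^ n → i + d + n ≤ M → ¬ Bad s i d n

lemma bad_congr {s s' : ℕ → Bool} {i d n : ℕ}
    (h : ∀ p < i + d + n, s p = s' p) (hb : Bad s i d n) : Bad s' i d n := by
  intro t ht
  rw [← h (i + t) (by omega), ← h (i + d + t) (by omega)]
  exact hb t ht

lemma goodN_mono {c : ℝ} {N M M' : ℕ} (h : M ≤ M') {s : ℕ → Bool}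
    (hg : GoodN c N M' s) : GoodN c N M s :=
  fun i d n h1 h2 h3 h4 => hg i d n h1 h2 h3 (h4.trans h)

lemma goodN_congr {c : ℝ} {N M : ℕ} {s s' : ℕ → Bool}
    (h : ∀ p < M, s p = s' p) (hg : GoodN c N M s) : GoodN c N M s' := by
  intro i d n h1 h2 h3 h4 hb
  exact hg i d n h1 h2 h3 h4 (bad_congr (fun p hp => (h p (by omega)).symm) hb)

/-- Extend a finite string by `false`s. -/
def extF (M : ℕ) (s : Fin M → Bool) : ℕ → Bool :=
  fun p => if h : p < M then s ⟨p, h⟩ else false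

/-- The finset of good strings of length `M`. -/
noncomputable def S (c : ℝ) (N M : ℕ) : Finset (Fin M → Bool) :=
  @Finset.filter _ (fun s => GoodN c N M (extF M s)) (Classical.decPred _) Finset.univ

lemma mem_S {c : ℝ} {N M : ℕ} {s : Fin M → Bool} :
    s ∈ S c N M ↔ GoodN c N M (extF M s) := by
  simp [S, Finset.mem_filter]

lemma card_S_zero (c : ℝ) (N : ℕ) : (S c N 0).card = 1 := by
  have : S c N 0 = Finset.univ := by
    ext s
    simp only [mem_S, Finset.mem_univ, iff_true]
    intro i d n _ h2 _ h4
    omega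
  rw [this, Finset.card_univ]
  simp



/-- Key counting inequality. -/
lemma key (c : ℝ) (hc0 : 0 < c) (N M : ℕ) :
    2 * ((S c N M).card : ℝ) ≤ ((S c N (M+1)).card : ℝ)
      + ∑ n ∈ Finset.Icc N (M+1), c ^ n * ((S c N (M+1-n)).card : ℝ) := by
  classical
  -- T : strings of length M+1 whose length-M prefix is good
  set T : Finset (Fin (M+1) → Bool) :=
    Finset.univ.filter (fun u => GoodN c N M (extF M (Fin.init u))) with hT
  -- Step 1 : 2 * card (S M) ≤ card T
  have step1 : 2 * (S c N M).card ≤ T.card := by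
    have : ((S c N M) ×ˢ (Finset.univ : Finset Bool)).card ≤ T.card := by
      apply Finset.card_le_card_of_injOn (fun x => Fin.snoc x.1 x.2)
      · rintro ⟨s, b⟩ hx
        simp only [Finset.mem_coe, Finset.mem_product, mem_S] at hx
        simp only [Finset.mem_coe, hT, Finset.mem_filter, Finset.mem_univ, true_and]
        rw [Fin.init_snoc]
        exact hx.1
      · rintro ⟨s, b⟩ _ ⟨s', b'⟩ _ h
        simp only at h
        have h1 : s = s' := by
          have := congrArg Fin.init h
          rwa [Fin.init_snoc, Fin.init_snoc] at this
        have h2 : b = b' := by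
          have := congrArg (fun f => f (Fin.last M)) h
          simpa [Fin.snoc_last] using this
        simp [h1, h2]
    rwa [Finset.card_product, Finset.card_univ, Fintype.card_bool, mul_comm] at this
  -- index set for violations ending at M+1
  set Q : Finset ((_ : ℕ) × ℕ) :=
    (Finset.Icc N (M+1)).sigma (fun n =>
      (Finset.Icc 1 (M+1)).filter (fun d : ℕ => (d : ℝ) < c ^ n ∧ n + d ≤ M + 1)) with hQ
  set E : ((_ : ℕ) × ℕ) → Finset (Fin (M+1) → Bool) :=
    (fun x => T.filter (fun u => Bad (extF (M+1) u) (M+1-x.1-x.2) x.2 x.1)) with hE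
  -- Step 2 : T \ S(M+1) ⊆ ⋃ E
  have step2 : T \ S c N (M+1) ⊆ Q.biUnion E := by
    intro u hu
    simp only [Finset.mem_sdiff, hT, Finset.mem_filter, Finset.mem_univ, true_and, mem_S] at hu
    obtain ⟨hgood, hbad⟩ := hu
    simp only [GoodN, not_forall] at hbad
    obtain ⟨i, d, n, h1, h2, h3, h4, hb⟩ := hbad
    rw [not_not] at hb
    -- the violation must end exactly at M+1
    have hend : i + d + n = M + 1 := by
      by_contra hne
      have hle : i + d + n ≤ M := by omega
      apply hgood i d n h1 h2 h3 hle
      apply bad_congr (s := extF (M+1) u) _ hb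
      intro p hp
      have hpM : p < M := by omega
      simp [extF, hpM, Nat.lt_succ_of_lt hpM, Fin.init]
    simp only [Finset.mem_biUnion]
    refine ⟨⟨n, d⟩, ?_, ?_⟩
    · simp only [hQ, Finset.mem_sigma, Finset.mem_Icc, Finset.mem_filter]
      exact ⟨⟨h1, by omega⟩, ⟨by omega, h3, by omega⟩⟩
    · simp only [hE, Finset.mem_filter]
      refine ⟨by simp [hT, hgood], ?_⟩
      have : M + 1 - n - d = i := by omega
      rwa [this]
  -- Step 3 : card (E ⟨n,d⟩) ≤ card (S (M+1-n)) for ⟨n,d⟩ ∈ Q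
  have step3 : ∀ x ∈ Q, (E x).card ≤ (S c N (M+1-x.1)).card := by
    rintro ⟨n, d⟩ hx
    dsimp only
    simp only [hQ, Finset.mem_sigma, Finset.mem_Icc, Finset.mem_filter] at hx
    obtain ⟨⟨hNn, hnM⟩, ⟨hd1, _⟩, hdc, hnd⟩ := hx
    have hn1 : 1 ≤ n := by
      by_contra h
      have hn0 : n = 0 := by omega
      rw [hn0, pow_zero] at hdc
      have : (1 : ℝ) ≤ (d : ℝ) := by exact_mod_cast hd1
      linarith
    have hsub : M + 1 - n ≤ M + 1 := by omega
    apply Finset.card_le_card_of_injOn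
      (fun u => (fun t : Fin (M+1-n) => u (Fin.castLE hsub t)))
    · intro u hu
      simp only [Finset.mem_coe, hE, Finset.mem_filter, hT, Finset.mem_univ, true_and] at hu
      obtain ⟨hgood, _⟩ := hu
      rw [Finset.mem_coe, mem_S]
      apply goodN_congr (s := extF M (Fin.init u))
      · intro p hp
        have hpM : p < M := by omega
        have hp1 : p < M + 1 - n := hp
        simp [extF, hpM, hp1, Fin.init]
      · exact goodN_mono (by omega) hgood
    · intro u hu v hv huv
      rw [Finset.mem_coe] at hu
      rw [Finset.mem_coe] at hv
      simp only [hE, Finset.mem_filter] at hu hv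
      have hbu := hu.2
      have hbv := hv.2
      have hagree : ∀ p, p < M + 1 - n → extF (M+1) u p = extF (M+1) v p := by
        intro p hp
        have hp1 : p < M + 1 := by omega
        have := congrFun huv ⟨p, hp⟩
        simpa [extF, hp1] using this
      have hall : ∀ p, extF (M+1) u p = extF (M+1) v p := by
        intro p
        induction p using Nat.strong_induction_on with
        | _ p ih =>
          by_cases hp1 : p < M + 1 - n
          · exact hagree p hp1
          · by_cases hp2 : p < M + 1
            · -- M+1-n ≤ p < M+1
              set i := M + 1 - n - d with hi
              have hidn : i + d + n = M + 1 := by omega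
              have ht : p - (i + d) < n := by omega
              have hpu := hbu (p - (i + d)) ht
              have hpv := hbv (p - (i + d)) ht
              have he1 : i + d + (p - (i + d)) = p := by omega
              rw [he1] at hpu hpv
              have he2 : i + (p - (i + d)) = p - d := by omega
              rw [he2] at hpu hpv
              have hlt : p - d < p := by omega
              rw [← hpu, ← hpv]
              exact ih (p - d) hlt
            · simp [extF, hp2]
      funext ⟨p, hp⟩
      have := hall p
      simpa [extF, hp] using this
  -- combine in ℕ
  have hTsub : T ⊆ S c N (M+1) ∪ (T \ S c N (M+1)) := by
    intro u hu
    by_cases h : u ∈ S c N (M+1)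
    · exact Finset.mem_union_left _ h
    · exact Finset.mem_union_right _ (Finset.mem_sdiff.mpr ⟨hu, h⟩)
  have hnat : 2 * (S c N M).card ≤ (S c N (M+1)).card + ∑ x ∈ Q, (S c N (M+1-x.1)).card := by
    calc 2 * (S c N M).card ≤ T.card := step1
      _ ≤ (S c N (M+1) ∪ (T \ S c N (M+1))).card := Finset.card_le_card hTsub
      _ ≤ (S c N (M+1)).card + (T \ S c N (M+1)).card := Finset.card_union_le _ _
      _ ≤ (S c N (M+1)).card + (Q.biUnion E).card := by
          exact Nat.add_le_add_left (Finset.card_le_card step2) _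
      _ ≤ (S c N (M+1)).card + ∑ x ∈ Q, (E x).card := by
          exact Nat.add_le_add_left (Finset.card_biUnion_le) _
      _ ≤ (S c N (M+1)).card + ∑ x ∈ Q, (S c N (M+1-x.1)).card := by
          exact Nat.add_le_add_left (Finset.sum_le_sum step3) _
  -- cast to ℝ and bound the sigma sum
  have hcast : (2 * (S c N M).card : ℝ)
      ≤ ((S c N (M+1)).card : ℝ) + ∑ x ∈ Q, ((S c N (M+1-x.1)).card : ℝ) := by
    exact_mod_cast hnat
  refine hcast.trans ?_
  apply add_le_add_right
  rw [hQ, Finset.sum_sigma]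
  apply Finset.sum_le_sum
  intro n hn
  dsimp only
  rw [Finset.sum_const, nsmul_eq_mul]
  apply mul_le_mul_of_nonneg_right _ (by positivity)
  -- card of the d-set ≤ c^n
  have hsub2 : ((Finset.Icc 1 (M+1)).filter (fun d : ℕ => (d : ℝ) < c ^ n ∧ n + d ≤ M + 1))
      ⊆ Finset.Icc 1 (Nat.floor (c ^ n)) := by
    intro d hd
    simp only [Finset.mem_filter, Finset.mem_Icc] at hd ⊢
    exact ⟨hd.1.1, Nat.le_floor hd.2.1.le⟩
  calc (((Finset.Icc 1 (M+1)).filter (fun d : ℕ => (d : ℝ) < c ^ n ∧ n + d ≤ M + 1)).card : ℝ)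
      ≤ ((Finset.Icc 1 (Nat.floor (c ^ n))).card : ℝ) := by
        exact_mod_cast Finset.card_le_card hsub2
    _ = (Nat.floor (c ^ n) : ℝ) := by rw [Nat.card_Icc]; simp
    _ ≤ c ^ n := Nat.floor_le (by positivity)

lemma geom_tail {r : ℝ} (h0 : 0 ≤ r) (h1 : r < 1) (N K : ℕ) :
    ∑ n ∈ Finset.Icc N K, r ^ n ≤ r ^ N / (1 - r) := by
  have h1r : 0 < 1 - r := by linarith
  rcases le_or_gt N K with h | h
  · have : Finset.Icc N K = Finset.Ico N (K+1) := by
      rw [Finset.Ico_add_one_right_eq_Icc]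
    rw [this, Finset.sum_Ico_eq_sum_range]
    have : ∀ i ∈ Finset.range (K + 1 - N), r ^ (N + i) = r ^ N * r ^ i := by
      intro i _; rw [pow_add]
    rw [Finset.sum_congr rfl this, ← Finset.mul_sum]
    rw [div_eq_mul_inv]
    apply mul_le_mul_of_nonneg_left _ (by positivity)
    have hne : r ≠ 1 := ne_of_lt h1
    rw [geom_sum_eq hne]
    rw [div_le_iff_of_neg (by linarith : r - 1 < 0)]
    have hne2 : (1:ℝ) - r ≠ 0 := by linarith
    have h2 : (1 - r)⁻¹ * (r - 1) = -1 := by field_simp; ring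
    rw [h2]
    have h3 : (0:ℝ) ≤ r ^ (K + 1 - N) := by positivity
    linarith
  · rw [Finset.Icc_eq_empty (by omega)]
    simp
    positivity

lemma growth (c : ℝ) (hc0 : 0 < c) (θ : ℝ) (hθ1 : 1 < θ)
    (N : ℕ) (hN : 1 ≤ N)
    (hgeo : θ * ((c / θ) ^ N / (1 - c / θ)) ≤ 2 - θ) (hr1 : c / θ < 1) :
    ∀ M : ℕ, θ * ((S c N M).card : ℝ) ≤ ((S c N (M+1)).card : ℝ) := by
  intro M
  induction M using Nat.strong_induction_on with
  | _ M IH =>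
    have hθ0 : (0:ℝ) < θ := by linarith
    have hr0 : 0 ≤ c / θ := by positivity
    -- chain: θ^m * g (M - m) ≤ g M for m ≤ M
    have aux : ∀ m : ℕ, ∀ j : ℕ, j + m = M → θ ^ m * ((S c N j).card : ℝ) ≤ ((S c N M).card : ℝ) := by
      intro m
      induction m with
      | zero => intro j hj; rw [pow_zero, one_mul]; rw [show j = M by omega]
      | succ m ihm =>
        intro j hj
        have hjM : j < M := by omega
        have h1 : θ * ((S c N j).card : ℝ) ≤ ((S c N (j+1)).card : ℝ) := IH j hjM
        have h2 : θ ^ m * ((S c N (j+1)).card : ℝ) ≤ ((S c N M).card : ℝ) := ihm (j+1) (by omega)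
        calc θ ^ (m+1) * ((S c N j).card : ℝ) = θ ^ m * (θ * ((S c N j).card : ℝ)) := by ring
          _ ≤ θ ^ m * ((S c N (j+1)).card : ℝ) := by
              apply mul_le_mul_of_nonneg_left h1 (by positivity)
          _ ≤ ((S c N M).card : ℝ) := h2
    have hkey := key c hc0 N M
    -- bound the sum term by term
    have hterm : ∀ n ∈ Finset.Icc N (M+1),
        c ^ n * ((S c N (M+1-n)).card : ℝ) ≤ θ * (c/θ) ^ n * ((S c N M).card : ℝ) := by
      intro n hn
      rw [Finset.mem_Icc] at hn
      have hn1 : 1 ≤ n := le_trans hN hn.1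
      have hauxn : θ ^ (n-1) * ((S c N (M+1-n)).card : ℝ) ≤ ((S c N M).card : ℝ) :=
        aux (n-1) (M+1-n) (by omega)
      have hpos : (0:ℝ) < θ ^ (n-1) := by positivity
      have h2 : ((S c N (M+1-n)).card : ℝ) ≤ ((S c N M).card : ℝ) / θ ^ (n-1) := by
        rw [le_div_iff₀ hpos]
        linarith [hauxn]
      calc c ^ n * ((S c N (M+1-n)).card : ℝ)
          ≤ c ^ n * (((S c N M).card : ℝ) / θ ^ (n-1)) := by
            apply mul_le_mul_of_nonneg_left h2 (by positivity)
        _ = θ * (c/θ) ^ n * ((S c N M).card : ℝ) := by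
            have hθn : (θ:ℝ) ^ n = θ ^ (n-1) * θ := by
              rw [← pow_succ]
              congr 1
              omega
            rw [div_pow]
            field_simp
            rw [hθn]
            ring
    have hsum : ∑ n ∈ Finset.Icc N (M+1), c ^ n * ((S c N (M+1-n)).card : ℝ)
        ≤ (2 - θ) * ((S c N M).card : ℝ) := by
      calc ∑ n ∈ Finset.Icc N (M+1), c ^ n * ((S c N (M+1-n)).card : ℝ)
          ≤ ∑ n ∈ Finset.Icc N (M+1), θ * (c/θ) ^ n * ((S c N M).card : ℝ) :=
            Finset.sum_le_sum hterm
        _ = (θ * ∑ n ∈ Finset.Icc N (M+1), (c/θ) ^ n) * ((S c N M).card : ℝ) := by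
            rw [Finset.mul_sum, Finset.sum_mul]
        _ ≤ (θ * ((c/θ) ^ N / (1 - c/θ))) * ((S c N M).card : ℝ) := by
            apply mul_le_mul_of_nonneg_right _ (by positivity)
            apply mul_le_mul_of_nonneg_left (geom_tail hr0 hr1 N (M+1)) (by positivity)
        _ ≤ (2 - θ) * ((S c N M).card : ℝ) := by
            apply mul_le_mul_of_nonneg_right hgeo (by positivity)
    linarith [hkey, hsum]

lemma S_pos (c : ℝ) (hc0 : 0 < c) (θ : ℝ) (hθ1 : 1 < θ)
    (N : ℕ) (hN : 1 ≤ N)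
    (hgeo : θ * ((c / θ) ^ N / (1 - c / θ)) ≤ 2 - θ) (hr1 : c / θ < 1) :
    ∀ M : ℕ, 0 < (S c N M).card := by
  intro M
  induction M with
  | zero => rw [card_S_zero]; norm_num
  | succ M ih =>
    have h := growth c hc0 θ hθ1 N hN hgeo hr1 M
    have : (0:ℝ) < ((S c N (M+1)).card : ℝ) := by
      have : (0:ℝ) < θ * ((S c N M).card : ℝ) := by
        apply mul_pos (by linarith)
        exact_mod_cast ih
      linarith
    exact_mod_cast this

section Koenig

variable (G : ℕ → (ℕ → Bool) → Prop)

/-- A finite prefix is extendable if arbitrarily long good strings agree with it. -/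
def Extendable (L : ℕ) (f : ℕ → Bool) : Prop :=
  ∀ K : ℕ, ∃ s : ℕ → Bool, G K s ∧ ∀ p < L, s p = f p

lemma extendable_step
    (mono : ∀ {K K' : ℕ}, K ≤ K' → ∀ {s : ℕ → Bool}, G K' s → G K s)
    {L : ℕ} {f : ℕ → Bool} (h : Extendable G L f) :
    ∃ b : Bool, Extendable G (L+1) (fun p => if p = L then b else f p) := by
  by_contra hc
  push_neg at hc
  have hT := hc true
  have hF := hc false
  simp only [Extendable, not_forall] at hT hF
  obtain ⟨Kt, hKt⟩ := hT
  obtain ⟨Kf, hKf⟩ := hF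
  push_neg at hKt hKf
  obtain ⟨s, hs, hag⟩ := h (max Kt Kf)
  rcases Bool.eq_false_or_eq_true (s L) with hb | hb
  · obtain ⟨p, hp, hne⟩ := hKt s (mono (le_max_left _ _) hs)
    apply hne
    by_cases hpL : p = L
    · simp [hpL, hb]
    · simp only [hpL, if_false]
      exact hag p (by omega)
  · obtain ⟨p, hp, hne⟩ := hKf s (mono (le_max_right _ _) hs)
    apply hne
    by_cases hpL : p = L
    · simp [hpL, hb]
    · simp only [hpL, if_false]
      exact hag p (by omega)

/-- König's lemma style extraction of an infinite good sequence. -/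
lemma koenig
    (mono : ∀ {K K' : ℕ}, K ≤ K' → ∀ {s : ℕ → Bool}, G K' s → G K s)
    (gcongr : ∀ {K : ℕ} {s s' : ℕ → Bool}, (∀ p < K, s p = s' p) → G K s → G K s')
    (ne : ∀ K, ∃ s, G K s) :
    ∃ α : ℕ → Bool, ∀ K, G K α := by
  have base : Extendable G 0 (fun _ => false) := by
    intro K
    obtain ⟨s, hs⟩ := ne K
    exact ⟨s, hs, by omega⟩
  let F : ∀ L : ℕ, {f : ℕ → Bool // Extendable G L f} :=
    Nat.rec ⟨fun _ => false, base⟩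
      (fun L prev =>
        ⟨fun p => if p = L then Classical.choose (extendable_step G mono prev.2) else prev.1 p,
          Classical.choose_spec (extendable_step G mono prev.2)⟩)
  have hFsucc : ∀ L p, p < L → (F (L+1)).1 p = (F L).1 p := by
    intro L p hp
    show (if p = L then _ else (F L).1 p) = (F L).1 p
    simp [Nat.ne_of_lt hp]
  set α : ℕ → Bool := fun p => (F (p+1)).1 p with hα
  have hagree : ∀ L p, p < L → (F L).1 p = α p := by
    intro L
    induction L with
    | zero => omega
    | succ L ih =>
      intro p hp
      by_cases hpL : p < L
      · rw [hFsucc L p hpL]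
        exact ih p hpL
      · have : p = L := by omega
        subst this
        rfl
  refine ⟨α, fun K => ?_⟩
  obtain ⟨s, hs, hag⟩ := (F K).2 K
  apply gcongr _ hs
  intro p hp
  rw [hag p hp, hagree K p hp]

end Koenig

end SepOcc

open SepOcc in
/-- **Separated occurrences (Beck/Mourad).** For every `c ∈ (1,2)` there are `N` and an
infinite binary sequence `α` such that any two occurrences of a common string of length
`n ≥ N` in `α` are at distance at least `c^n`. -/
theorem separated_occurrences (c : ℝ) (hc1 : 1 < c) (hc2 : c < 2) :
    ∃ N : ℕ, ∃ α : ℕ → Bool, ∀ n i j : ℕ, N ≤ n →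
      (List.ofFn fun t : Fin n => α (i + t)) =
        (List.ofFn fun t : Fin n => α (j + t)) →
      i = j ∨ c ^ n ≤ |(i : ℝ) - (j : ℝ)| := by
  classical
  set θ : ℝ := (c + 2) / 2 with hθ
  have hθc : c < θ := by rw [hθ]; linarith
  have hθ2 : θ < 2 := by rw [hθ]; linarith
  have hθ1 : 1 < θ := by rw [hθ]; linarith
  have hθ0 : (0:ℝ) < θ := by linarith
  have hc0 : (0:ℝ) < c := by linarith
  have hr0 : 0 ≤ c / θ := by positivity
  have hr1 : c / θ < 1 := (div_lt_one hθ0).mpr hθc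
  have h1r : 0 < 1 - c / θ := by linarith
  have hε : 0 < (2 - θ) * (1 - c / θ) / θ :=
    div_pos (mul_pos (by linarith) h1r) hθ0
  obtain ⟨N₀, hN₀⟩ := exists_pow_lt_of_lt_one hε hr1
  set N := max N₀ 1 with hN
  have hN1 : 1 ≤ N := le_max_right _ _
  have hpowN : (c/θ) ^ N ≤ (c/θ) ^ N₀ :=
    pow_le_pow_of_le_one hr0 hr1.le (le_max_left _ _)
  have hgeo : θ * ((c/θ) ^ N / (1 - c/θ)) ≤ 2 - θ := by
    have hx : (c/θ) ^ N < (2 - θ) * (1 - c/θ) / θ := lt_of_le_of_lt hpowN hN₀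
    have h2 : θ * (c/θ) ^ N < θ * ((2 - θ) * (1 - c/θ) / θ) :=
      mul_lt_mul_of_pos_left hx hθ0
    have h3 : θ * ((2 - θ) * (1 - c/θ) / θ) = (2 - θ) * (1 - c/θ) := by
      field_simp
    rw [← mul_div_assoc, div_le_iff₀ h1r]
    linarith
  have hpos := S_pos c hc0 θ hθ1 N hN1 hgeo hr1
  have hne : ∀ K, ∃ s : ℕ → Bool, GoodN c N K s := by
    intro K
    obtain ⟨s, hs⟩ := Finset.card_pos.mp (hpos K)
    exact ⟨extF K s, mem_S.mp hs⟩
  obtain ⟨α, hα⟩ := koenig (GoodN c N)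
    (fun h _ hs => goodN_mono h hs) (fun h hg => goodN_congr h hg) hne
  refine ⟨N, α, fun n i j hn heq => ?_⟩
  rcases eq_or_ne i j with hij | hij
  · exact Or.inl hij
  · right
    by_contra hlt
    push_neg at hlt
    have hfun := List.ofFn_inj.mp heq
    rcases Nat.lt_or_ge i j with h | h
    · have hij' : i < j := h
      set d := j - i with hd
      have hd1 : 1 ≤ d := by omega
      have habs : |(i:ℝ) - (j:ℝ)| = (d:ℝ) := by
        rw [abs_sub_comm, abs_of_nonneg (by
          simp only [sub_nonneg]
          exact_mod_cast hij'.le)]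
        push_cast [hd, Nat.cast_sub hij'.le]
        ring
      have hdc : (d:ℝ) < c ^ n := by rw [← habs]; exact hlt
      apply hα (i + d + n) i d n hn hd1 hdc le_rfl
      intro t ht
      rw [show i + d + t = j + t by omega]
      exact congrFun hfun ⟨t, ht⟩
    · have hij' : j < i := by omega
      set d := i - j with hd
      have hd1 : 1 ≤ d := by omega
      have habs : |(i:ℝ) - (j:ℝ)| = (d:ℝ) := by
        rw [abs_of_nonneg (by
          simp only [sub_nonneg]
          exact_mod_cast hij'.le)]
        push_cast [hd, Nat.cast_sub hij'.le]
        ring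
      have hdc : (d:ℝ) < c ^ n := by rw [← habs]; exact hlt
      apply hα (j + d + n) j d n hn hd1 hdc le_rfl
      intro t ht
      rw [show j + d + t = i + t by omega]
      exact (congrFun hfun ⟨t, ht⟩).symm
end

section
/- For every ε > 0 there exist N and an infinite binary sequence α such that for every n ≥ N and every position i, the adjacent blocks α(i)...α(i+n-1) and α(i+n)...α(i+2n-1) differ in at least (1/2 - ε)·n positions. -/
open Finset

namespace AdjB

open scoped Classical

variable {T : ℕ}




/-- `E` depends only on coordinates in `S`. -/
def dep (E : Finset (Fin T → Bool)) (S : Finset (Fin T)) : Prop :=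
  ∀ ω ω' : Fin T → Bool, (∀ s ∈ S, ω s = ω' s) → (ω ∈ E ↔ ω' ∈ E)

lemma dep_mono {E : Finset (Fin T → Bool)} {S S' : Finset (Fin T)}
    (h : dep E S) (hs : S ⊆ S') : dep E S' :=
  fun ω ω' hag => h ω ω' (fun s hsS => hag s (hs hsS))

/-- merge of two functions along S -/
def mrg (S : Finset (Fin T)) (a b : Fin T → Bool) : Fin T → Bool :=
  fun s => if s ∈ S then a s else b s

lemma indep_card {E F : Finset (Fin T → Bool)} {S : Finset (Fin T)}
    (hE : dep E S) (hF : dep F Sᶜ) :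
    (E ∩ F).card * 2 ^ T = E.card * F.card := by
  have key : ((E ∩ F) ×ˢ (univ : Finset (Fin T → Bool))).card = (E ×ˢ F).card := by
    apply Finset.card_bij (fun p _ => (mrg S p.1 p.2, mrg S p.2 p.1))
    · rintro ⟨ω, τ⟩ hp
      simp only [Finset.mem_product, Finset.mem_inter] at hp ⊢
      obtain ⟨⟨hωE, hωF⟩, -⟩ := hp
      constructor
      · exact (hE ω (mrg S ω τ) (fun s hs => by simp [mrg, hs])).1 hωE
      · exact (hF ω (mrg S τ ω) (fun s hs => by
          simp only [Finset.mem_compl] at hs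
          simp [mrg, hs])).1 hωF
    · rintro ⟨ω, τ⟩ hp ⟨ω', τ'⟩ hp' heq
      simp only [Prod.mk.injEq] at heq
      obtain ⟨h1, h2⟩ := heq
      have hω : ω = ω' := by
        funext s
        by_cases hs : s ∈ S
        · have := congrFun h1 s; simpa [mrg, hs] using this
        · have := congrFun h2 s; simpa [mrg, hs] using this
      have hτ : τ = τ' := by
        funext s
        by_cases hs : s ∈ S
        · have := congrFun h2 s; simpa [mrg, hs] using this
        · have := congrFun h1 s; simpa [mrg, hs] using this
      exact Prod.ext hω hτ
    · rintro ⟨u, w⟩ hp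
      simp only [Finset.mem_product] at hp
      obtain ⟨huE, hwF⟩ := hp
      refine ⟨(mrg S u w, mrg S w u), ?_, ?_⟩
      · simp only [Finset.mem_product, Finset.mem_inter, Finset.mem_univ, and_true]
        constructor
        · exact (hE u (mrg S u w) (fun s hs => by simp [mrg, hs])).1 huE
        · exact (hF w (mrg S u w) (fun s hs => by
            simp only [Finset.mem_compl] at hs
            simp [mrg, hs])).1 hwF
      · simp only [Prod.mk.injEq]
        constructor
        · funext s; by_cases hs : s ∈ S <;> simp [mrg, hs]
        · funext s; by_cases hs : s ∈ S <;> simp [mrg, hs]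
  have hcu : (univ : Finset (Fin T → Bool)).card = 2 ^ T := by
    simp [Finset.card_univ]
  rw [Finset.card_product, Finset.card_product, hcu] at key
  exact key




variable {T : ℕ}

section LLL

variable (I : Finset (ℕ × ℕ)) (A : ℕ × ℕ → Finset (Fin T → Bool))
  (S : ℕ × ℕ → Finset (Fin T)) (x : ℕ × ℕ → ℝ)

def Nbr (v : ℕ × ℕ) : Finset (ℕ × ℕ) := I.filter fun u => ¬ Disjoint (S u) (S v)

def K (U : Finset (ℕ × ℕ)) : Finset (Fin T → Bool) :=
  univ.filter fun ω => ∀ u ∈ U, ω ∉ A u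

lemma K_empty : K (T := T) A ∅ = univ := by simp [K]

lemma K_antitone {U V : Finset (ℕ × ℕ)} (h : U ⊆ V) : K (T := T) A V ⊆ K A U := by
  intro ω hω
  simp only [K, mem_filter] at hω ⊢
  exact ⟨hω.1, fun u hu => hω.2 u (h hu)⟩

lemma K_insert (u : ℕ × ℕ) (U : Finset (ℕ × ℕ)) :
    K (T := T) A (insert u U) = K A U \ A u := by
  ext ω
  simp only [K, mem_filter, mem_sdiff, mem_insert, mem_univ, true_and]
  constructor
  · intro h; exact ⟨fun w hw => h w (Or.inr hw), h u (Or.inl rfl)⟩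
  · rintro ⟨h1, h2⟩ w hw
    rcases hw with rfl | hw
    · exact h2
    · exact h1 w hw

variable (hx0 : ∀ v ∈ I, 0 ≤ x v) (hx1 : ∀ v ∈ I, x v < 1)
  (hdep : ∀ v ∈ I, dep (A v) (S v))
  (hmain : ∀ v ∈ I, ((A v).card : ℝ) ≤ x v * (∏ u ∈ Nbr I S v, (1 - x u)) * 2 ^ T)

include hx0 hx1 hdep hmain in
lemma lll_P1 : ∀ k : ℕ, ∀ U : Finset (ℕ × ℕ), U.card ≤ k → U ⊆ I → ∀ v ∈ I, v ∉ U →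
    (((A v ∩ K A U).card : ℝ)) ≤ x v * ((K A U).card : ℝ) := by
  intro k
  induction k with
  | zero =>
    intro U hcard hUI v hv hvU
    have hU : U = ∅ := card_eq_zero.mp (Nat.le_zero.mp hcard)
    subst hU
    rw [K_empty]
    have h1 : (A v ∩ univ) = A v := by simp
    rw [h1]
    have hprod : (∏ u ∈ Nbr I S v, (1 - x u)) ≤ 1 := by
      apply Finset.prod_le_one
      · intro u hu
        have := hx1 u (mem_of_mem_filter u hu); linarith
      · intro u hu
        have := hx0 u (mem_of_mem_filter u hu); linarith
    have hprod0 : (0:ℝ) ≤ ∏ u ∈ Nbr I S v, (1 - x u) := by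
      apply Finset.prod_nonneg
      intro u hu
      have := hx1 u (mem_of_mem_filter u hu); linarith
    have := hmain v hv
    have hxv := hx0 v hv
    calc ((A v).card : ℝ) ≤ x v * (∏ u ∈ Nbr I S v, (1 - x u)) * 2 ^ T := this
      _ ≤ x v * 1 * 2^T := by
          apply mul_le_mul_of_nonneg_right _ (by positivity)
          exact mul_le_mul_of_nonneg_left hprod hxv
      _ = x v * ((univ : Finset (Fin T → Bool)).card : ℝ) := by
          simp [Finset.card_univ]
  | succ k ihk =>
    intro U hcard hUI v hv hvU
    classical
    set U₂ : Finset (ℕ × ℕ) := U \ Nbr I S v with hU₂def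
    set U₁ : Finset (ℕ × ℕ) := U ∩ Nbr I S v with hU₁def
    have hU₂U : U₂ ⊆ U := sdiff_subset
    have hUU₂ : U \ U₂ = U₁ := by
      ext u; simp only [hU₂def, hU₁def, mem_sdiff, mem_inter, not_and, not_not]
      tauto
    -- chain lemma
    have chain : ∀ j : ℕ, ∀ W : Finset (ℕ × ℕ), U₂ ⊆ W → W ⊆ U → (W \ U₂).card ≤ j →
        (∏ u ∈ W \ U₂, (1 - x u)) * ((K A U₂).card : ℝ) ≤ ((K A W).card : ℝ) := by
      intro j
      induction j with
      | zero =>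
        intro W hW1 hW2 hc
        have : W \ U₂ = ∅ := card_eq_zero.mp (Nat.le_zero.mp hc)
        have hWU₂ : W = U₂ := le_antisymm (sdiff_eq_empty_iff_subset.mp this) hW1
        subst hWU₂
        simp [this]
      | succ j ihj =>
        intro W hW1 hW2 hc
        rcases eq_empty_or_nonempty (W \ U₂) with hemp | ⟨u, hu⟩
        · have hWU₂ : W = U₂ := le_antisymm (sdiff_eq_empty_iff_subset.mp hemp) hW1
          subst hWU₂
          simp [hemp]
        · have huW : u ∈ W := (mem_sdiff.mp hu).1
          have huU₂ : u ∉ U₂ := (mem_sdiff.mp hu).2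
          set W' := W.erase u with hW'def
          have hW'W : W' ⊆ W := erase_subset u W
          have hW'U : W' ⊆ U := hW'W.trans hW2
          have hU₂W' : U₂ ⊆ W' := by
            intro w hw
            exact mem_erase.mpr ⟨fun h => huU₂ (h ▸ hw), hW1 hw⟩
          have hWins : W = insert u W' := by
            rw [hW'def, insert_erase huW]
          have hsd : W \ U₂ = insert u (W' \ U₂) := by
            rw [hWins, insert_sdiff_of_notMem _ huU₂]
          have hunotin : u ∉ W' \ U₂ := fun h => (notMem_erase u W) (mem_sdiff.mp h).1
          have hcard' : (W' \ U₂).card ≤ j := by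
            have : (W \ U₂).card = (W' \ U₂).card + 1 := by
              rw [hsd, card_insert_of_notMem hunotin]
            omega
          -- P1 at W'
          have hW'card : W'.card ≤ k := by
            have h1 : W'.card < W.card := card_erase_lt_of_mem huW
            have h2 : W.card ≤ U.card := card_le_card hW2
            omega
          have huI : u ∈ I := hUI (hW2 huW)
          have huW' : u ∉ W' := notMem_erase u W
          have hP1 := ihk W' hW'card (hW'U.trans hUI) u huI huW'
          -- card of K W
          have hKW : K A W = K A W' \ A u := by rw [hWins, K_insert]
          have hnat := Finset.card_inter_add_card_sdiff (K A W') (A u)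
          have hic : (K A W' ∩ A u) = (A u ∩ K A W') := by rw [inter_comm]
          rw [hic] at hnat
          have hcardKW : ((K A W).card : ℝ) = ((K A W').card : ℝ) - ((A u ∩ K A W').card : ℝ) := by
            rw [hKW]
            have := hnat
            push_cast [← this]
            ring
          have hxu0 := hx0 u huI
          have hxu1 := hx1 u huI
          have hKW'lb := ihj W' hU₂W' hW'U hcard'
          have hprodnn : (0:ℝ) ≤ ∏ w ∈ W' \ U₂, (1 - x w) := by
            apply Finset.prod_nonneg
            intro w hw
            have hwI : w ∈ I := hUI (hW'U (mem_sdiff.mp hw).1)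
            have := hx1 w hwI; linarith
          have hKU₂nn : (0:ℝ) ≤ ((K A U₂).card : ℝ) := Nat.cast_nonneg _
          calc (∏ w ∈ W \ U₂, (1 - x w)) * ((K A U₂).card : ℝ)
              = (1 - x u) * ((∏ w ∈ W' \ U₂, (1 - x w)) * ((K A U₂).card : ℝ)) := by
                rw [hsd, Finset.prod_insert hunotin]; ring
            _ ≤ (1 - x u) * ((K A W').card : ℝ) := by
                apply mul_le_mul_of_nonneg_left hKW'lb (by linarith)
            _ = ((K A W').card : ℝ) - x u * ((K A W').card : ℝ) := by ring
            _ ≤ ((K A W').card : ℝ) - ((A u ∩ K A W').card : ℝ) := by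
                have := hP1; linarith
            _ = ((K A W).card : ℝ) := hcardKW.symm
    -- use chain with W = U
    have hU₂I : U₂ ⊆ I := hU₂U.trans hUI
    have hchainU : (∏ u ∈ U₁, (1 - x u)) * ((K A U₂).card : ℝ) ≤ ((K A U).card : ℝ) := by
      have := chain (U \ U₂).card U hU₂U (Subset.refl U) le_rfl
      rwa [hUU₂] at this
    -- independence
    have hdepK : dep (K A U₂) (S v)ᶜ := by
      intro ω ω' hag
      simp only [K, mem_filter, mem_univ, true_and]
      constructor <;> intro h u hu
      · intro hmem
        have huNbr : u ∉ Nbr I S v := (mem_sdiff.mp hu).2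
        have huI : u ∈ I := hU₂I hu
        have hdisj : Disjoint (S u) (S v) := by
          by_contra hcon
          exact huNbr (mem_filter.mpr ⟨huI, hcon⟩)
        have hagu : ∀ s ∈ S u, ω s = ω' s := by
          intro s hs
          exact hag s (mem_compl.mpr (Finset.disjoint_left.mp hdisj hs))
        exact h u hu ((hdep u huI ω ω' hagu).2 hmem)
      · intro hmem
        have huNbr : u ∉ Nbr I S v := (mem_sdiff.mp hu).2
        have huI : u ∈ I := hU₂I hu
        have hdisj : Disjoint (S u) (S v) := by
          by_contra hcon
          exact huNbr (mem_filter.mpr ⟨huI, hcon⟩)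
        have hagu : ∀ s ∈ S u, ω s = ω' s := by
          intro s hs
          exact hag s (mem_compl.mpr (Finset.disjoint_left.mp hdisj hs))
        exact h u hu ((hdep u huI ω ω' hagu).1 hmem)
    have hindep := indep_card (hdep v hv) hdepK
    -- main chain of inequalities
    have hsub : (A v ∩ K A U).card ≤ (A v ∩ K A U₂).card :=
      card_le_card (inter_subset_inter (Subset.refl _) (K_antitone A hU₂U))
    have hprodU₁nn : (0:ℝ) ≤ ∏ u ∈ U₁, (1 - x u) := by
      apply Finset.prod_nonneg
      intro w hw
      have hwI : w ∈ I := hUI (mem_inter.mp hw).1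
      have := hx1 w hwI; linarith
    have hNbrsplit : (∏ u ∈ Nbr I S v, (1 - x u)) ≤ ∏ u ∈ U₁, (1 - x u) := by
      have hU₁sub : U₁ ⊆ Nbr I S v := inter_subset_right
      rw [← Finset.prod_sdiff hU₁sub]
      have h1 : (∏ u ∈ Nbr I S v \ U₁, (1 - x u)) ≤ 1 := by
        apply Finset.prod_le_one
        · intro w hw
          have hwI : w ∈ I := mem_of_mem_filter w (mem_sdiff.mp hw).1
          have := hx1 w hwI; linarith
        · intro w hw
          have hwI : w ∈ I := mem_of_mem_filter w (mem_sdiff.mp hw).1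
          have := hx0 w hwI; linarith
      nlinarith [hprodU₁nn]
    have hxv0 := hx0 v hv
    have hKU₂nn' : (0:ℝ) ≤ ((K A U₂).card : ℝ) := by positivity
    have h2T : (0:ℝ) < 2 ^ T := by positivity
    -- |A v ∩ K U| * 2^T ≤ x v * |K U| * 2^T
    have key : ((A v ∩ K A U).card : ℝ) * 2 ^ T ≤ x v * ((K A U).card : ℝ) * 2 ^ T := by
      calc ((A v ∩ K A U).card : ℝ) * 2 ^ T
          ≤ ((A v ∩ K A U₂).card : ℝ) * 2 ^ T := by
            apply mul_le_mul_of_nonneg_right _ (le_of_lt h2T)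
            exact_mod_cast hsub
        _ = ((A v).card : ℝ) * ((K A U₂).card : ℝ) := by exact_mod_cast hindep
        _ ≤ (x v * (∏ u ∈ Nbr I S v, (1 - x u)) * 2 ^ T) * ((K A U₂).card : ℝ) := by
            apply mul_le_mul_of_nonneg_right (hmain v hv) hKU₂nn'
        _ ≤ (x v * (∏ u ∈ U₁, (1 - x u)) * 2 ^ T) * ((K A U₂).card : ℝ) := by
            apply mul_le_mul_of_nonneg_right _ hKU₂nn'
            apply mul_le_mul_of_nonneg_right _ (le_of_lt h2T)
            exact mul_le_mul_of_nonneg_left hNbrsplit hxv0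
        _ = (x v * 2 ^ T) * ((∏ u ∈ U₁, (1 - x u)) * ((K A U₂).card : ℝ)) := by ring
        _ ≤ (x v * 2 ^ T) * ((K A U).card : ℝ) := by
            apply mul_le_mul_of_nonneg_left hchainU (by positivity)
        _ = x v * ((K A U).card : ℝ) * 2 ^ T := by ring
    exact le_of_mul_le_mul_right key h2T

include hx0 hx1 hdep hmain in
lemma lll_P2 : ∀ j : ℕ, ∀ U : Finset (ℕ × ℕ), U ⊆ I → U.card ≤ j →
    (∏ u ∈ U, (1 - x u)) * (2 ^ T : ℝ) ≤ ((K A U).card : ℝ) := by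
  intro j
  induction j with
  | zero =>
    intro U hUI hc
    have hU : U = ∅ := card_eq_zero.mp (Nat.le_zero.mp hc)
    subst hU
    rw [K_empty]
    simp [Finset.card_univ]
  | succ j ihj =>
    intro U hUI hc
    rcases eq_empty_or_nonempty U with hemp | ⟨u, hu⟩
    · subst hemp
      rw [K_empty]
      simp [Finset.card_univ]
    · set U' := U.erase u with hU'def
      have hU'U : U' ⊆ U := erase_subset u U
      have hU'I : U' ⊆ I := hU'U.trans hUI
      have huI : u ∈ I := hUI hu
      have huU' : u ∉ U' := notMem_erase u U
      have hUins : U = insert u U' := by rw [hU'def, insert_erase hu]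
      have hcard' : U'.card ≤ j := by
        have : U'.card < U.card := card_erase_lt_of_mem hu
        omega
      have hP1 := lll_P1 I A S x hx0 hx1 hdep hmain U'.card U' le_rfl hU'I u huI huU'
      have hKU : K A U = K A U' \ A u := by rw [hUins, K_insert]
      have hnat := Finset.card_inter_add_card_sdiff (K A U') (A u)
      have hic : (K A U' ∩ A u) = (A u ∩ K A U') := by rw [inter_comm]
      rw [hic] at hnat
      have hcardKU : ((K A U).card : ℝ) = ((K A U').card : ℝ) - ((A u ∩ K A U').card : ℝ) := by
        rw [hKU]
        push_cast [← hnat]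
        ring
      have hxu0 := hx0 u huI
      have hxu1 := hx1 u huI
      have hlow := ihj U' hU'I hcard'
      have hprodnn : (0:ℝ) ≤ ∏ w ∈ U', (1 - x w) := by
        apply Finset.prod_nonneg
        intro w hw
        have := hx1 w (hU'I hw); linarith
      calc (∏ w ∈ U, (1 - x w)) * (2 ^ T : ℝ)
          = (1 - x u) * ((∏ w ∈ U', (1 - x w)) * (2 ^ T : ℝ)) := by
            rw [hUins, Finset.prod_insert huU']; ring
        _ ≤ (1 - x u) * ((K A U').card : ℝ) := by
            apply mul_le_mul_of_nonneg_left hlow (by linarith)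
        _ = ((K A U').card : ℝ) - x u * ((K A U').card : ℝ) := by ring
        _ ≤ ((K A U').card : ℝ) - ((A u ∩ K A U').card : ℝ) := by linarith
        _ = ((K A U).card : ℝ) := hcardKU.symm

include hx0 hx1 hdep hmain in
lemma lll_exists : ∃ ω : Fin T → Bool, ∀ v ∈ I, ω ∉ A v := by
  have h := lll_P2 I A S x hx0 hx1 hdep hmain I.card I (Subset.refl I) le_rfl
  have hprodpos : (0:ℝ) < ∏ u ∈ I, (1 - x u) := by
    apply Finset.prod_pos
    intro w hw
    have := hx1 w hw; linarith
  have hpos : (0:ℝ) < ((K A I).card : ℝ) := by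
    have h2T : (0:ℝ) < 2 ^ T := by positivity
    nlinarith
  have : (K A I).Nonempty := card_pos.mp (by exact_mod_cast hpos)
  obtain ⟨ω, hω⟩ := this
  refine ⟨ω, ?_⟩
  simp only [K, mem_filter] at hω
  exact hω.2

end LLL




/-- `exp(-2y) ≤ 1 - y` for `0 ≤ y ≤ 1/2`. -/
lemma exp_neg_le_one_sub {y : ℝ} (h0 : 0 ≤ y) (h1 : y ≤ 1/2) :
    Real.exp (-(2*y)) ≤ 1 - y := by
  have he := Real.exp_pos (2*y)
  have h1' : (1:ℝ) + 2*y ≤ Real.exp (2*y) := by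
    have := Real.add_one_le_exp (2*y); linarith
  have h2 : (1:ℝ) ≤ (1 - y) * (1 + 2*y) := by nlinarith
  have h3 : (1:ℝ) ≤ (1 - y) * Real.exp (2*y) := by nlinarith
  rw [Real.exp_neg]
  rw [inv_le_iff_one_le_mul₀ he]
  linarith [mul_comm (1-y) (Real.exp (2*y))]

/-- `(m+1) u^m (1-u) ≤ 1` for `0 ≤ u < 1`. -/
lemma succ_mul_pow_le {u : ℝ} (h0 : 0 ≤ u) (h1 : u < 1) (m : ℕ) :
    ((m:ℝ)+1) * u^m * (1-u) ≤ 1 := by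
  have hsum : ((m:ℝ)+1) * u^m ≤ ∑ k ∈ range (m+1), u^k := by
    have h := Finset.card_nsmul_le_sum (range (m+1)) (fun k => u^k) (u^m)
      (fun k hk => pow_le_pow_of_le_one h0 (le_of_lt h1) (by
        simp only [mem_range] at hk; omega))
    simpa [nsmul_eq_mul, add_comm] using h
  have hgeom : (∑ k ∈ range (m+1), u^k) * (1-u) = 1 - u^(m+1) := by
    have := geom_sum_mul u (m+1)
    nlinarith [this]
  have hup : (0:ℝ) ≤ u^(m+1) := pow_nonneg h0 _
  nlinarith [pow_nonneg h0 m]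

/-- tail geometric bound -/
lemma geom_tail_le {t : ℝ} (h0 : 0 ≤ t) (h1 : t < 1) (N M : ℕ) :
    ∑ m ∈ Finset.Ico N M, t^m ≤ t^N / (1-t) := by
  rcases le_or_gt M N with h | h
  · rw [Finset.Ico_eq_empty (by omega)]
    simp only [Finset.sum_empty]
    exact div_nonneg (pow_nonneg h0 _) (by linarith)
  · rw [Finset.sum_Ico_eq_sum_range]
    have : ∀ k, t^(N+k) = t^N * t^k := fun k => pow_add t N k
    rw [Finset.sum_congr rfl (fun k _ => this k), ← Finset.mul_sum]
    have hgs : ∑ k ∈ range (M - N), t^k ≤ 1/(1-t) := by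
      have hmul := geom_sum_mul t (M - N)
      have h2 : (∑ k ∈ range (M-N), t^k) * (1-t) = 1 - t^(M-N) := by nlinarith
      have h3 : (0:ℝ) ≤ t^(M-N) := pow_nonneg h0 _
      rw [le_div_iff₀ (by linarith)]
      nlinarith
    calc t^N * ∑ k ∈ range (M-N), t^k ≤ t^N * (1/(1-t)) := by
          apply mul_le_mul_of_nonneg_left hgs (pow_nonneg h0 _)
      _ = t^N / (1-t) := by ring





/-- extend a finite word by `false`s -/
def extf (T : ℕ) (ω : Fin T → Bool) (a : ℕ) : Bool :=
  if h : a < T then ω ⟨a, h⟩ else false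

noncomputable def Ev (T : ℕ) (c : ℝ) (n i : ℕ) : Finset (Fin T → Bool) :=
  univ.filter fun ω =>
    ((((range n).filter (fun j => extf T ω (i+j) ≠ extf T ω (i+n+j))).card : ℝ) < c * n)

noncomputable def Ev' (T : ℕ) (c : ℝ) (n i : ℕ) : Finset (Fin T → Bool) :=
  univ.filter fun ω =>
    ((((range n).filter (fun j => extf T ω (i+n+j) = true)).card : ℝ) < c * n)

def Sup (T n i : ℕ) : Finset (Fin T) :=
  univ.filter fun s => i ≤ (s:ℕ) ∧ (s:ℕ) < i + 2*n

lemma dep_Ev {T : ℕ} (c : ℝ) {n i : ℕ} (hT : i + 2*n ≤ T) :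
    dep (Ev T c n i) (Sup T n i) := by
  intro ω ω' hag
  have hco : ∀ a, i ≤ a → a < i + 2*n → extf T ω a = extf T ω' a := by
    intro a h1 h2
    have haT : a < T := lt_of_lt_of_le h2 hT
    have : (⟨a, haT⟩ : Fin T) ∈ Sup T n i := by
      simp only [Sup, mem_filter, mem_univ, true_and]
      exact ⟨h1, h2⟩
    have := hag _ this
    simp only [extf, dif_pos haT]
    exact this
  have hfilter :
      (range n).filter (fun j => extf T ω (i+j) ≠ extf T ω (i+n+j)) =
      (range n).filter (fun j => extf T ω' (i+j) ≠ extf T ω' (i+n+j)) := by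
    apply filter_congr
    intro j hj
    simp only [mem_range] at hj
    rw [hco (i+j) (by omega) (by omega), hco (i+n+j) (by omega) (by omega)]
  simp only [Ev, mem_filter, mem_univ, true_and, hfilter]

lemma card_band {T n i : ℕ} (hT : i + 2*n ≤ T) :
    ((univ : Finset (Fin T)).filter
      (fun s : Fin T => i + n ≤ (s:ℕ) ∧ (s:ℕ) < i + 2*n)).card = n := by
  conv_rhs => rw [← Finset.card_range n]
  apply Finset.card_bij (fun (s : Fin T) _ => (s : ℕ) - (i + n)) (t := range n)
  · intro s hs
    simp only [mem_filter, mem_univ, true_and] at hs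
    simp only [mem_range]
    omega
  · intro s hs s' hs' heq
    simp only [mem_filter, mem_univ, true_and] at hs hs'
    apply Fin.ext
    omega
  · intro j hj
    simp only [mem_range] at hj
    refine ⟨⟨i+n+j, by omega⟩, ?_, ?_⟩
    · simp only [mem_filter, mem_univ, true_and]
      omega
    · simp only
      omega

/-- the xor involution -/
def flip (T n i : ℕ) (ω : Fin T → Bool) : Fin T → Bool :=
  fun s => if i + n ≤ (s:ℕ) ∧ (s:ℕ) < i + 2*n then Bool.xor (ω s) (extf T ω ((s:ℕ) - n)) else ω s

lemma extf_pos {T : ℕ} (ω : Fin T → Bool) {a : ℕ} (h : a < T) :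
    extf T ω a = ω ⟨a, h⟩ := dif_pos h

lemma extf_neg {T : ℕ} (ω : Fin T → Bool) {a : ℕ} (h : ¬ a < T) :
    extf T ω a = false := dif_neg h

lemma flip_apply {T n i : ℕ} (ω : Fin T → Bool) (s : Fin T) :
    flip T n i ω s =
      if i + n ≤ (s:ℕ) ∧ (s:ℕ) < i + 2*n then Bool.xor (ω s) (extf T ω ((s:ℕ) - n))
      else ω s := rfl

lemma extf_flip_low {T n i : ℕ} (ω : Fin T → Bool) {a : ℕ}
    (ha : a < i + n ∨ i + 2*n ≤ a) : extf T (flip T n i ω) a = extf T ω a := by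
  by_cases h : a < T
  · rw [extf_pos _ h, extf_pos _ h, flip_apply, if_neg]
    simp only [Fin.val_mk]
    omega
  · rw [extf_neg _ h, extf_neg _ h]

lemma extf_flip_band {T n i : ℕ} (ω : Fin T → Bool) {j : ℕ} (hj : j < n)
    (hT : i + 2*n ≤ T) :
    extf T (flip T n i ω) (i+n+j) = Bool.xor (extf T ω (i+n+j)) (extf T ω (i+j)) := by
  have h1 : i + n + j < T := by omega
  rw [extf_pos _ h1, flip_apply, if_pos (by simp only [Fin.val_mk]; omega)]
  have h2 : ((⟨i+n+j, h1⟩ : Fin T) : ℕ) - n = i + j := by simp only [Fin.val_mk]; omega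
  rw [h2, extf_pos ω h1]

lemma flip_flip {T n i : ℕ} (ω : Fin T → Bool) (hT : i + 2*n ≤ T) :
    flip T n i (flip T n i ω) = ω := by
  funext s
  rw [flip_apply]
  by_cases hs : i + n ≤ (s:ℕ) ∧ (s:ℕ) < i + 2*n
  · rw [if_pos hs]
    have h1 : extf T (flip T n i ω) ((s:ℕ) - n) = extf T ω ((s:ℕ) - n) :=
      extf_flip_low ω (Or.inl (by omega))
    rw [h1, flip_apply, if_pos hs]
    cases (ω s) <;> cases (extf T ω ((s:ℕ) - n)) <;> rfl
  · rw [if_neg hs, flip_apply, if_neg hs]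

lemma card_Ev_eq {T n i : ℕ} (c : ℝ) (hT : i + 2*n ≤ T) :
    (Ev T c n i).card = (Ev' T c n i).card := by
  symm
  apply Finset.card_bij (fun τ _ => flip T n i τ)
  · intro τ hτ
    simp only [Ev', mem_filter, mem_univ, true_and] at hτ
    simp only [Ev, mem_filter, mem_univ, true_and]
    have hfe : (range n).filter
        (fun j => extf T (flip T n i τ) (i+j) ≠ extf T (flip T n i τ) (i+n+j)) =
        (range n).filter (fun j => extf T τ (i+n+j) = true) := by
      apply filter_congr
      intro j hj
      simp only [mem_range] at hj
      rw [extf_flip_low τ (Or.inl (by omega)), extf_flip_band τ hj hT]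
      cases hb : extf T τ (i+j) <;> cases hc : extf T τ (i+n+j) <;> simp
    rw [hfe]
    exact hτ
  · intro τ hτ τ' hτ' heq
    have := congrArg (flip T n i) heq
    rwa [flip_flip τ hT, flip_flip τ' hT] at this
  · intro ω hω
    simp only [Ev, mem_filter, mem_univ, true_and] at hω
    refine ⟨flip T n i ω, ?_, flip_flip ω hT⟩
    simp only [Ev', mem_filter, mem_univ, true_and]
    have hfe : (range n).filter (fun j => extf T (flip T n i ω) (i+n+j) = true) =
        (range n).filter (fun j => extf T ω (i+j) ≠ extf T ω (i+n+j)) := by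
      apply filter_congr
      intro j hj
      simp only [mem_range] at hj
      rw [extf_flip_band ω hj hT]
      cases hb : extf T ω (i+j) <;> cases hc : extf T ω (i+n+j) <;> simp
    rw [hfe]
    exact hω

namespace Counting

lemma card_Ev'_le {T n i : ℕ} {c xx : ℝ} (hx0 : 0 < xx) (hx1 : xx ≤ 1)
    (hT : i + 2*n ≤ T) :
    ((Ev' T c n i).card : ℝ) * xx ^ (c * (n:ℝ)) ≤ (1+xx)^n * 2^(T-n) := by
  classical
  set P : Fin T → Prop := fun s => (i + n ≤ (s:ℕ) ∧ (s:ℕ) < i + 2*n) with hPdef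
  set f : Fin T → Bool → ℝ := fun s b => if P s ∧ b = true then xx else 1 with hfdef
  have hcount : ∀ ω : Fin T → Bool,
      ((univ : Finset (Fin T)).filter (fun s : Fin T => P s ∧ ω s = true)).card
      = ((range n).filter (fun j => extf T ω (i+n+j) = true)).card := by
    intro ω
    apply Finset.card_bij (fun (s : Fin T) _ => (s:ℕ) - (i+n))
    · intro s hs
      simp only [mem_filter, mem_univ, true_and, hPdef] at hs
      simp only [mem_filter, mem_range]
      have hs' : i + n + ((s:ℕ) - (i+n)) = (s:ℕ) := by omega
      constructor
      · omega
      · rw [hs', extf_pos ω s.isLt]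
        simpa using hs.2
    · intro s hs s' hs' heq
      simp only [mem_filter, mem_univ, true_and, hPdef] at hs hs'
      apply Fin.ext
      omega
    · intro j hj
      simp only [mem_filter, mem_range] at hj
      have hjT : i + n + j < T := by omega
      refine ⟨⟨i+n+j, hjT⟩, ?_, ?_⟩
      · simp only [mem_filter, mem_univ, true_and, hPdef, Fin.val_mk]
        refine ⟨⟨by omega, by omega⟩, ?_⟩
        have := hj.2
        rwa [extf_pos ω hjT] at this
      · simp only [Fin.val_mk]
        omega
  have hprodω : ∀ ω : Fin T → Bool,
      (∏ s, f s (ω s)) =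
        xx ^ (((range n).filter (fun j => extf T ω (i+n+j) = true)).card) := by
    intro ω
    have hsplit := Finset.prod_filter_mul_prod_filter_not (univ : Finset (Fin T))
      (fun s => P s ∧ ω s = true) (fun s => f s (ω s))
    rw [← hsplit]
    have h1 : (∏ s ∈ univ.filter (fun s : Fin T => P s ∧ ω s = true), f s (ω s))
        = ∏ _s ∈ univ.filter (fun s : Fin T => P s ∧ ω s = true), xx := by
      apply prod_congr rfl
      intro s hs
      simp only [mem_filter] at hs
      simp only [hfdef]
      rw [if_pos hs.2]
    have h2 : (∏ s ∈ univ.filter (fun s : Fin T => ¬(P s ∧ ω s = true)), f s (ω s))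
        = ∏ _s ∈ univ.filter (fun s : Fin T => ¬(P s ∧ ω s = true)), (1:ℝ) := by
      apply prod_congr rfl
      intro s hs
      simp only [mem_filter] at hs
      simp only [hfdef]
      rw [if_neg hs.2]
    rw [h1, h2, prod_const, prod_const, one_pow, mul_one, hcount ω]
  have hident : (∑ ω : Fin T → Bool, ∏ s, f s (ω s)) = ∏ s : Fin T, (f s true + f s false) := by
    have h := Finset.prod_univ_sum (fun _ : Fin T => (univ : Finset Bool)) f
    rw [Fintype.piFinset_univ] at h
    have hb : ∀ s : Fin T, (∑ b ∈ (univ : Finset Bool), f s b) = f s true + f s false := by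
      intro s
      simp [Fintype.sum_bool]
    rw [Finset.prod_congr rfl (fun s _ => hb s)] at h
    exact h.symm
  have hrhs : (∏ s : Fin T, (f s true + f s false)) = (1+xx)^n * 2^(T-n) := by
    have hval : ∀ s : Fin T, f s true + f s false = if P s then 1 + xx else 2 := by
      intro s
      by_cases hP : P s
      · simp only [hfdef, if_pos (⟨hP, rfl⟩ : P s ∧ (true = true))]
        rw [if_neg (by simp), if_pos hP]
        ring
      · rw [show f s true = 1 from by simp only [hfdef]; rw [if_neg (by tauto)],
            show f s false = 1 from by simp only [hfdef]; rw [if_neg (by simp)],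
            if_neg hP]
        norm_num
    rw [Finset.prod_congr rfl (fun s _ => hval s), Finset.prod_ite, prod_const, prod_const]
    have hcb : (univ.filter P).card = n := by
      have heq : (univ.filter P) =
          (univ.filter (fun s : Fin T => i + n ≤ (s:ℕ) ∧ (s:ℕ) < i + 2*n)) := by
        apply filter_congr
        intro s _
        exact Iff.rfl
      rw [heq]; exact card_band hT
    have hcbn : (univ.filter (fun s : Fin T => ¬ P s)).card = T - n := by
      have h2 := Finset.card_filter_add_card_filter_not
        (s := (univ : Finset (Fin T))) (p := P)
      simp only [card_univ, Fintype.card_fin] at h2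
      omega
    rw [hcb, hcbn]
  have hterm0 : ∀ ω : Fin T → Bool, (0:ℝ) ≤ ∏ s, f s (ω s) := by
    intro ω
    rw [hprodω]
    exact pow_nonneg (le_of_lt hx0) _
  have hmark : ∀ ω ∈ Ev' T c n i, xx ^ (c * (n:ℝ)) ≤ ∏ s, f s (ω s) := by
    intro ω hω
    rw [hprodω]
    simp only [Ev', mem_filter, mem_univ, true_and] at hω
    have h := Real.rpow_le_rpow_of_exponent_ge hx0 hx1 (le_of_lt hω)
    rwa [Real.rpow_natCast] at h
  have hsmul := Finset.card_nsmul_le_sum (Ev' T c n i)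
    (fun ω => ∏ s, f s (ω s)) (xx ^ (c * (n:ℝ))) hmark
  have hsub : (∑ ω ∈ Ev' T c n i, ∏ s, f s (ω s)) ≤ ∑ ω : Fin T → Bool, ∏ s, f s (ω s) := by
    apply Finset.sum_le_sum_of_subset_of_nonneg (subset_univ _)
    intro ω _ _
    exact hterm0 ω
  have := le_trans (le_trans (by simpa [nsmul_eq_mul] using hsmul) hsub)
    (le_of_eq (hident.trans hrhs))
  exact this

end Counting



lemma rho_lt_one {ε : ℝ} (hε0 : 0 < ε) (hε2 : ε < 1/2) :
    0 < (1-ε) * (1-2*ε) ^ (-(1/2 - ε) : ℝ) ∧ (1-ε) * (1-2*ε) ^ (-(1/2 - ε) : ℝ) < 1 := by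
  have hxx : (0:ℝ) < 1 - 2*ε := by linarith
  have h1ε : (0:ℝ) < 1 - ε := by linarith
  have hρpos : 0 < (1-ε) * (1-2*ε) ^ (-(1/2 - ε) : ℝ) := by
    apply mul_pos h1ε
    exact Real.rpow_pos_of_pos hxx _
  refine ⟨hρpos, ?_⟩
  have hlog : Real.log ((1-ε) * (1-2*ε) ^ (-(1/2 - ε) : ℝ)) < 0 := by
    rw [Real.log_mul (ne_of_gt h1ε) (ne_of_gt (Real.rpow_pos_of_pos hxx _)),
      Real.log_rpow hxx]
    have hl1 : Real.log (1-ε) < -ε := by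
      have := Real.log_lt_sub_one_of_pos h1ε (by linarith)
      linarith
    have hl2 : (-(1/2 - ε)) * Real.log (1-2*ε) ≤ ε := by
      have hinv : Real.log (1-2*ε) = - Real.log (1-2*ε)⁻¹ := by
        rw [Real.log_inv]; ring
      have hle : Real.log (1-2*ε)⁻¹ ≤ (1-2*ε)⁻¹ - 1 :=
        Real.log_le_sub_one_of_pos (by positivity)
      have hval : ((1-2*ε)⁻¹ - 1) = 2*ε / (1-2*ε) := by
        field_simp; ring
      rw [hinv]
      have h3 : (-(1/2 - ε)) * (- Real.log (1-2*ε)⁻¹) = (1/2 - ε) * Real.log (1-2*ε)⁻¹ := by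
        ring
      rw [h3]
      have h4 : (1/2 - ε) * Real.log (1-2*ε)⁻¹ ≤ (1/2 - ε) * (2*ε / (1-2*ε)) := by
        apply mul_le_mul_of_nonneg_left _ (by linarith)
        rw [← hval]; exact hle
      have h5 : (1/2 - ε) * (2*ε / (1-2*ε)) = ε := by
        field_simp
      linarith
    linarith
  have := (Real.log_neg_iff hρpos).mp hlog
  exact this


set_option maxHeartbeats 2000000 in
theorem exists_word (ε : ℝ) (hε0 : 0 < ε) (hε2 : ε < 1/2) :
    ∃ N : ℕ, 1 ≤ N ∧ ∀ T : ℕ, ∃ ω : Fin T → Bool, ∀ n i : ℕ, N ≤ n → i + 2*n ≤ T →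
      ((1/2 - ε) * n ≤ (((range n).filter
        (fun j => extf T ω (i+j) ≠ extf T ω (i+n+j))).card : ℝ)) := by
  have hxx0 : (0:ℝ) < 1 - 2*ε := by linarith
  have hxx1 : (1:ℝ) - 2*ε ≤ 1 := by linarith
  obtain ⟨hρ0, hρ1⟩ := rho_lt_one hε0 hε2
  set ρ : ℝ := (1-ε) * (1-2*ε) ^ (-(1/2 - ε) : ℝ) with hρdef
  set σ : ℝ := Real.sqrt ρ with hσdef
  set τ : ℝ := Real.sqrt σ with hτdef
  have hσ0 : 0 < σ := Real.sqrt_pos.mpr hρ0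
  have hσ1 : σ < 1 := by
    rw [hσdef, show (1:ℝ) = Real.sqrt 1 from (Real.sqrt_one).symm]
    exact Real.sqrt_lt_sqrt (le_of_lt hρ0) hρ1
  have hσσ : σ * σ = ρ := Real.mul_self_sqrt (le_of_lt hρ0)
  have hτ0 : 0 < τ := Real.sqrt_pos.mpr hσ0
  have hτ1 : τ < 1 := by
    rw [hτdef, show (1:ℝ) = Real.sqrt 1 from (Real.sqrt_one).symm]
    exact Real.sqrt_lt_sqrt (le_of_lt hσ0) hσ1
  have hττ : τ * τ = σ := Real.mul_self_sqrt (le_of_lt hσ0)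
  have hlogσ : 0 < - Real.log σ := by
    have := Real.log_neg hσ0 hσ1
    linarith
  have h1τ : 0 < 1 - τ := by linarith
  obtain ⟨N₁, hN₁⟩ := exists_pow_lt_of_lt_one
    (show (0:ℝ) < ((1-τ)^2 * (- Real.log σ))/4 by positivity) hτ1
  obtain ⟨N₂, hN₂⟩ := exists_pow_lt_of_lt_one (show (0:ℝ) < 1/2 by norm_num) hσ1
  set N := max 1 (max N₁ N₂) with hNdef
  have hN1 : 1 ≤ N := le_max_left _ _
  have hτN : τ^N ≤ τ^N₁ :=
    pow_le_pow_of_le_one hτ0.le hτ1.le (le_trans (le_max_left _ _) (le_max_right _ _))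
  have hσN : σ^N ≤ 1/2 := by
    have h1 : σ^N ≤ σ^N₂ :=
      pow_le_pow_of_le_one hσ0.le hσ1.le (le_trans (le_max_right _ _) (le_max_right _ _))
    linarith
  have hq : 4 * τ^N / (1-τ)^2 ≤ - Real.log σ := by
    have h1 : τ^N < ((1-τ)^2 * (- Real.log σ))/4 := lt_of_le_of_lt hτN hN₁
    rw [div_le_iff₀ (by positivity)]
    nlinarith [sq_nonneg (1-τ)]
  refine ⟨N, hN1, ?_⟩
  intro T
  set I : Finset (ℕ×ℕ) :=
    ((range (T+1)) ×ˢ (range (T+1))).filter (fun v => N ≤ v.1 ∧ v.2 + 2*v.1 ≤ T) with hIdef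
  set A : ℕ×ℕ → Finset (Fin T → Bool) := fun v => Ev T (1/2 - ε) v.1 v.2 with hAdef
  set S : ℕ×ℕ → Finset (Fin T) := fun v => Sup T v.1 v.2 with hSdef
  set x : ℕ×ℕ → ℝ := fun v => σ ^ v.1 with hxdef
  have hmemI : ∀ v ∈ I, N ≤ v.1 ∧ v.2 + 2*v.1 ≤ T := by
    intro v hv
    rw [hIdef] at hv
    exact (mem_filter.mp hv).2
  have hx0 : ∀ v ∈ I, 0 ≤ x v := by
    intro v _
    rw [hxdef]
    exact (pow_pos hσ0 _).le
  have hx1 : ∀ v ∈ I, x v < 1 := by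
    intro v hv
    rw [hxdef]
    exact pow_lt_one₀ hσ0.le hσ1 (by have := (hmemI v hv).1; omega)
  have hdep : ∀ v ∈ I, dep (A v) (S v) := by
    intro v hv
    rw [hAdef, hSdef]
    exact dep_Ev _ (hmemI v hv).2
  have hmain : ∀ v ∈ I, ((A v).card : ℝ) ≤ x v * (∏ u ∈ Nbr I S v, (1 - x u)) * 2 ^ T := by
    rintro ⟨n, i⟩ hv
    obtain ⟨hNn, hTn⟩ := hmemI (n,i) hv
    have hn1 : 1 ≤ n := le_trans hN1 hNn
    have hnT : n ≤ T := by omega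
    -- Step 1 : |A| ≤ ρ^n 2^T
    have hcard1 : (((A (n,i)).card : ℕ) : ℝ) ≤ ρ^n * 2^T := by
      have he : (A (n,i)).card = (Ev' T (1/2 - ε) n i).card := by
        rw [hAdef]
        exact card_Ev_eq (1/2 - ε) hTn
      have hb := Counting.card_Ev'_le (T := T) (n := n) (i := i)
        (c := 1/2 - ε) (xx := 1-2*ε) hxx0 hxx1 hTn
      have hxcn : (0:ℝ) < (1-2*ε) ^ ((1/2 - ε) * (n:ℝ)) := Real.rpow_pos_of_pos hxx0 _
      have heq : ρ^n * 2^T * (1-2*ε) ^ ((1/2 - ε) * (n:ℝ))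
          = (1+(1-2*ε))^n * 2^(T-n) := by
        have e1 : ρ^n = (1-ε)^n * ((1-2*ε) ^ (-(1/2 - ε) : ℝ))^n := by
          rw [hρdef, mul_pow]
        have e2 : ((1-2*ε) ^ (-(1/2 - ε) : ℝ))^n = (1-2*ε) ^ ((-(1/2 - ε)) * (n:ℝ)) := by
          rw [← Real.rpow_natCast ((1-2*ε) ^ (-(1/2 - ε) : ℝ)) n, ← Real.rpow_mul hxx0.le]
        have e3 : (1-2*ε) ^ ((-(1/2 - ε)) * (n:ℝ)) * (1-2*ε) ^ ((1/2 - ε) * (n:ℝ)) = 1 := by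
          rw [← Real.rpow_add hxx0,
            show (-(1/2 - ε))*(n:ℝ) + (1/2 - ε)*(n:ℝ) = 0 by ring, Real.rpow_zero]
        have e4 : (1+(1-2*ε))^n = 2^n * (1-ε)^n := by
          rw [← mul_pow]
          congr 1
          ring
        have e5 : (2:ℝ)^(T-n) * 2^n = 2^T := by
          rw [← pow_add]
          congr 1
          omega
        calc ρ^n * 2^T * (1-2*ε) ^ ((1/2 - ε) * (n:ℝ))
            = (1-ε)^n * 2^T * (((1-2*ε) ^ (-(1/2 - ε) : ℝ))^n * (1-2*ε) ^ ((1/2 - ε) * (n:ℝ))) := by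
              rw [e1]; ring
          _ = (1-ε)^n * 2^T := by rw [e2, e3, mul_one]
          _ = (1+(1-2*ε))^n * 2^(T-n) := by rw [e4, ← e5]; ring
      rw [he]
      have hle : ((Ev' T (1/2 - ε) n i).card : ℝ) * (1-2*ε) ^ ((1/2 - ε) * (n:ℝ))
          ≤ ρ^n * 2^T * (1-2*ε) ^ ((1/2 - ε) * (n:ℝ)) := by
        rw [heq]
        exact hb
      exact le_of_mul_le_mul_right hle hxcn
    -- Step 2 : neighbour product bound
    have hNbrBd : ρ^n ≤ σ^n * ∏ u ∈ Nbr I S (n,i), (1 - x u) := by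
      set J : Finset (ℕ×ℕ) := (Finset.Ico N (T+1)).biUnion
        (fun m => ({m} : Finset ℕ) ×ˢ Finset.Ico (i + 1 - 2*m) (i + 2*n)) with hJdef
      have hsubJ : Nbr I S (n,i) ⊆ J := by
        intro u hu
        have huI : u ∈ I := mem_of_mem_filter u hu
        have hcond : ¬ Disjoint (S u) (S (n,i)) := by
          have := (mem_filter.mp hu).2
          exact this
        obtain ⟨s, hs1, hs2⟩ := Finset.not_disjoint_iff.mp hcond
        rw [hSdef] at hs1 hs2
        simp only [Sup, mem_filter, mem_univ, true_and] at hs1 hs2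
        have hu1 : N ≤ u.1 := (hmemI u huI).1
        have hu1T : u.1 < T + 1 := by
          have := (hmemI u huI).2
          omega
        rw [hJdef]
        rw [mem_biUnion]
        refine ⟨u.1, mem_Ico.mpr ⟨hu1, hu1T⟩, ?_⟩
        have : (u.1, u.2) ∈ ({u.1} : Finset ℕ) ×ˢ Finset.Ico (i + 1 - 2*u.1) (i + 2*n) := by
          rw [mem_product]
          refine ⟨mem_singleton_self _, mem_Ico.mpr ⟨by omega, by omega⟩⟩
        simpa using this
      have hfac_nonneg : ∀ u ∈ J, (0:ℝ) ≤ 1 - x u := by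
        intro u hu
        rw [hJdef, mem_biUnion] at hu
        obtain ⟨m, hm, hum⟩ := hu
        rw [mem_product] at hum
        have hu1 : u.1 = m := by simpa using hum.1
        have hNm : N ≤ m := (mem_Ico.mp hm).1
        rw [hxdef]
        simp only
        rw [hu1]
        have : σ^m < 1 := pow_lt_one₀ hσ0.le hσ1 (by omega)
        linarith
      have hfac_le_one : ∀ u ∈ J, 1 - x u ≤ 1 := by
        intro u _
        rw [hxdef]
        simp only
        have : (0:ℝ) ≤ σ ^ u.1 := (pow_pos hσ0 _).le
        linarith
      have hprod_mono : ∏ u ∈ J, (1 - x u) ≤ ∏ u ∈ Nbr I S (n,i), (1 - x u) := by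
        rw [← Finset.prod_sdiff hsubJ]
        have h1 : ∏ u ∈ J \ Nbr I S (n,i), (1 - x u) ≤ 1 := by
          apply Finset.prod_le_one
          · intro u hu; exact hfac_nonneg u (mem_sdiff.mp hu).1
          · intro u hu; exact hfac_le_one u (mem_sdiff.mp hu).1
        have h2 : (0:ℝ) ≤ ∏ u ∈ Nbr I S (n,i), (1 - x u) := by
          apply Finset.prod_nonneg
          intro u hu
          exact hfac_nonneg u (hsubJ hu)
        nlinarith
      have hJval : ∏ u ∈ J, (1 - x u)
          = ∏ m ∈ Finset.Ico N (T+1), (1 - σ^m) ^ (Finset.Ico (i + 1 - 2*m) (i + 2*n)).card := by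
        rw [hJdef]
        rw [Finset.prod_biUnion]
        · apply Finset.prod_congr rfl
          intro m _
          rw [Finset.prod_product, Finset.prod_singleton]
          have hxc : ∀ b ∈ Finset.Ico (i + 1 - 2*m) (i + 2*n), (1 - x (m, b)) = 1 - σ^m := by
            intro b _
            rw [hxdef]
          rw [Finset.prod_congr rfl hxc, Finset.prod_const]
        · intro m hm m' hm' hne
          apply Finset.disjoint_left.mpr
          intro a ha ha'
          rw [mem_product] at ha ha'
          have h1 : a.1 = m := by simpa using ha.1
          have h2 : a.1 = m' := by simpa using ha'.1
          exact hne (by omega)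
      -- per-m bounds
      have hperm : ∀ m ∈ Finset.Ico N (T+1),
          (Real.exp (-(2 * σ^m)))^(2*n + 2*m)
            ≤ (1 - σ^m) ^ (Finset.Ico (i + 1 - 2*m) (i + 2*n)).card := by
        intro m hm
        have hNm : N ≤ m := (mem_Ico.mp hm).1
        have hym : σ^m ≤ 1/2 := by
          have : σ^m ≤ σ^N := pow_le_pow_of_le_one hσ0.le hσ1.le hNm
          linarith
        have hy0 : (0:ℝ) ≤ σ^m := (pow_pos hσ0 _).le
        have hcardm : (Finset.Ico (i + 1 - 2*m) (i + 2*n)).card ≤ 2*n + 2*m := by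
          rw [Nat.card_Ico]
          omega
        have hone : (0:ℝ) ≤ 1 - σ^m := by linarith
        have h1 : (1 - σ^m) ^ (2*n + 2*m)
            ≤ (1 - σ^m) ^ (Finset.Ico (i + 1 - 2*m) (i + 2*n)).card :=
          pow_le_pow_of_le_one hone (by linarith) hcardm
        have h2 : (Real.exp (-(2 * σ^m)))^(2*n + 2*m) ≤ (1 - σ^m) ^ (2*n + 2*m) := by
          apply pow_le_pow_left₀ (Real.exp_pos _).le
          exact exp_neg_le_one_sub hy0 hym
        exact le_trans h2 h1
      have hprod_exp : ∏ m ∈ Finset.Ico N (T+1), (Real.exp (-(2 * σ^m)))^(2*n + 2*m)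
          ≤ ∏ m ∈ Finset.Ico N (T+1), (1 - σ^m) ^ (Finset.Ico (i + 1 - 2*m) (i + 2*n)).card := by
        apply Finset.prod_le_prod
        · intro m _
          exact pow_nonneg (Real.exp_pos _).le _
        · exact hperm
      -- evaluate the exp product
      have hexpval : ∏ m ∈ Finset.Ico N (T+1), (Real.exp (-(2 * σ^m)))^(2*n + 2*m)
          = Real.exp (∑ m ∈ Finset.Ico N (T+1), ((2*n + 2*m : ℕ) : ℝ) * (-(2 * σ^m))) := by
        rw [Real.exp_sum]
        apply Finset.prod_congr rfl
        intro m _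
        rw [← Real.exp_nat_mul]
      -- bound the sum
      have hsum_bd : ∑ m ∈ Finset.Ico N (T+1), ((2*n + 2*m : ℕ) : ℝ) * (2 * σ^m)
          ≤ (n:ℝ) * (4 * τ^N / (1-τ)^2) := by
        have hpt : ∀ m ∈ Finset.Ico N (T+1),
            ((2*n + 2*m : ℕ) : ℝ) * (2 * σ^m) ≤ (4*(n:ℝ)/(1-τ)) * τ^m := by
          intro m _
          have e1 : ((2*n + 2*m : ℕ) : ℝ) = 2*(n:ℝ) + 2*(m:ℝ) := by push_cast; ring
          have hmn : ((2*n + 2*m : ℕ) : ℝ) * (2 * σ^m) = 4*((n:ℝ)+(m:ℝ)) * σ^m := by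
            rw [e1]; ring
          rw [hmn]
          have hnm : (n:ℝ)+(m:ℝ) ≤ (n:ℝ)*(1+(m:ℝ)) := by
            have hn1' : (1:ℝ) ≤ (n:ℝ) := by exact_mod_cast hn1
            nlinarith [Nat.cast_nonneg (α := ℝ) m]
          have hσm : σ^m = τ^m * τ^m := by
            rw [← mul_pow, hττ]
          have htail : ((m:ℝ)+1) * τ^m ≤ 1/(1-τ) := by
            have := succ_mul_pow_le hτ0.le hτ1 m
            rw [le_div_iff₀ h1τ]
            linarith
          have hτm0 : (0:ℝ) ≤ τ^m := (pow_pos hτ0 _).le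
          have hτm1 : τ^m ≤ 1 := pow_le_one₀ hτ0.le hτ1.le
          calc 4*((n:ℝ)+(m:ℝ)) * σ^m ≤ 4*((n:ℝ)*(1+(m:ℝ))) * σ^m := by
                apply mul_le_mul_of_nonneg_right _ ((pow_pos hσ0 _).le)
                linarith
            _ = 4*(n:ℝ) * (((m:ℝ)+1) * τ^m) * τ^m := by rw [hσm]; ring
            _ ≤ 4*(n:ℝ) * (1/(1-τ)) * τ^m := by
                apply mul_le_mul_of_nonneg_right _ hτm0
                apply mul_le_mul_of_nonneg_left htail
                positivity
            _ = (4*(n:ℝ)/(1-τ)) * τ^m := by ring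
        calc ∑ m ∈ Finset.Ico N (T+1), ((2*n + 2*m : ℕ) : ℝ) * (2 * σ^m)
            ≤ ∑ m ∈ Finset.Ico N (T+1), (4*(n:ℝ)/(1-τ)) * τ^m := Finset.sum_le_sum hpt
          _ = (4*(n:ℝ)/(1-τ)) * ∑ m ∈ Finset.Ico N (T+1), τ^m := by rw [Finset.mul_sum]
          _ ≤ (4*(n:ℝ)/(1-τ)) * (τ^N/(1-τ)) := by
              apply mul_le_mul_of_nonneg_left (geom_tail_le hτ0.le hτ1 N (T+1))
              positivity
          _ = (n:ℝ) * (4 * τ^N / (1-τ)^2) := by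
              field_simp
      -- conclude
      have hfinal : σ^n ≤ ∏ u ∈ Nbr I S (n,i), (1 - x u) := by
        have h1 : σ^n = Real.exp ((n:ℝ) * Real.log σ) := by
          rw [Real.exp_nat_mul, Real.exp_log hσ0]
        have h2 : (n:ℝ) * Real.log σ ≤ -((n:ℝ) * (4 * τ^N / (1-τ)^2)) := by
          have hn0 : (0:ℝ) ≤ (n:ℝ) := Nat.cast_nonneg n
          nlinarith
        have h3 : Real.exp ((n:ℝ) * Real.log σ)
            ≤ Real.exp (∑ m ∈ Finset.Ico N (T+1), ((2*n + 2*m : ℕ) : ℝ) * (-(2 * σ^m))) := by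
          apply Real.exp_le_exp.mpr
          have : ∑ m ∈ Finset.Ico N (T+1), ((2*n + 2*m : ℕ) : ℝ) * (-(2 * σ^m))
              = - ∑ m ∈ Finset.Ico N (T+1), ((2*n + 2*m : ℕ) : ℝ) * (2 * σ^m) := by
            rw [← Finset.sum_neg_distrib]
            apply Finset.sum_congr rfl
            intro m _
            ring
          rw [this]
          linarith
        calc σ^n = Real.exp ((n:ℝ) * Real.log σ) := h1
          _ ≤ Real.exp (∑ m ∈ Finset.Ico N (T+1), ((2*n + 2*m : ℕ) : ℝ) * (-(2 * σ^m))) := h3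
          _ = ∏ m ∈ Finset.Ico N (T+1), (Real.exp (-(2 * σ^m)))^(2*n + 2*m) := hexpval.symm
          _ ≤ ∏ m ∈ Finset.Ico N (T+1), (1 - σ^m) ^ (Finset.Ico (i + 1 - 2*m) (i + 2*n)).card :=
              hprod_exp
          _ = ∏ u ∈ J, (1 - x u) := hJval.symm
          _ ≤ ∏ u ∈ Nbr I S (n,i), (1 - x u) := hprod_mono
      have hρσ : ρ^n = σ^n * σ^n := by
        rw [← hσσ, mul_pow]
      rw [hρσ]
      apply mul_le_mul_of_nonneg_left hfinal (pow_pos hσ0 _).le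
    -- combine
    have hxv : x (n,i) = σ^n := by rw [hxdef]
    calc ((A (n,i)).card : ℝ) ≤ ρ^n * 2^T := hcard1
      _ ≤ (σ^n * ∏ u ∈ Nbr I S (n,i), (1 - x u)) * 2^T := by
          apply mul_le_mul_of_nonneg_right hNbrBd (by positivity)
      _ = x (n,i) * (∏ u ∈ Nbr I S (n,i), (1 - x u)) * 2 ^ T := by rw [hxv]
  obtain ⟨ω, hω⟩ := lll_exists I A S x hx0 hx1 hdep hmain
  refine ⟨ω, ?_⟩
  intro n i hNn hTn
  have hvI : (n,i) ∈ I := by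
    rw [hIdef]
    rw [mem_filter, mem_product]
    have hn1 : 1 ≤ n := le_trans hN1 hNn
    refine ⟨⟨mem_range.mpr (by omega), mem_range.mpr (by omega)⟩, hNn, hTn⟩
  have hnot := hω (n,i) hvI
  rw [hAdef] at hnot
  by_contra hcon
  push_neg at hcon
  apply hnot
  show ω ∈ univ.filter _
  exact mem_filter.mpr ⟨mem_univ ω, hcon⟩

end AdjB

open Finset in
/-- **Adjacent blocks are very different.** For every `ε > 0` there are `N` and an
infinite binary sequence `α` such that any two adjacent blocks of length `n ≥ N`
differ in at least `(1/2 - ε)·n` positions. -/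
theorem adjacent_blocks_differ (ε : ℝ) (hε : 0 < ε) :
    ∃ N : ℕ, ∃ α : ℕ → Bool, ∀ n i : ℕ, N ≤ n →
      (1 / 2 - ε) * n ≤
        ((Finset.range n).filter (fun j => α (i + j) ≠ α (i + n + j))).card := by
  classical
  by_cases hε2 : ε < 1/2
  · obtain ⟨N, hN1, hw⟩ := AdjB.exists_word ε hε hε2
    choose w hwspec using hw
    set U : Ultrafilter ℕ := Filter.hyperfilter ℕ with hUdef
    set α : ℕ → Bool :=
      fun a => if {T | AdjB.extf T (w T) a = true} ∈ U then true else false with hαdef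
    have key : ∀ a : ℕ, {T | AdjB.extf T (w T) a = α a} ∈ U := by
      intro a
      by_cases h : {T | AdjB.extf T (w T) a = true} ∈ U
      · have hα : α a = true := by rw [hαdef]; simp only; rw [if_pos h]
        rw [hα]; exact h
      · have hα : α a = false := by rw [hαdef]; simp only; rw [if_neg h]
        rw [hα]
        have hc : {T | AdjB.extf T (w T) a = false} = {T | AdjB.extf T (w T) a = true}ᶜ := by
          ext T
          simp only [Set.mem_setOf_eq, Set.mem_compl_iff, Bool.not_eq_true]
        rw [hc]
        exact Ultrafilter.compl_mem_iff_notMem.mpr h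
    refine ⟨N, α, ?_⟩
    intro n i hNn
    -- pick a suitable T
    have hbig : {T | i + 2*n ≤ T} ∈ U := by
      have hcof : {T | i + 2*n ≤ T} ∈ (Filter.cofinite : Filter ℕ) := by
        rw [Filter.mem_cofinite]
        have : {T : ℕ | i + 2*n ≤ T}ᶜ ⊆ Set.Iio (i + 2*n) := by
          intro t ht
          simp only [Set.mem_compl_iff, Set.mem_setOf_eq, not_le] at ht
          exact ht
        exact Set.Finite.subset (Set.finite_Iio _) this
      exact Filter.hyperfilter_le_cofinite hcof
    have hall : (⋂ a ∈ Finset.range (i + 2*n), {T | AdjB.extf T (w T) a = α a})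
        ∈ (U : Filter ℕ) := by
      rw [Filter.biInter_finset_mem]
      intro a _
      exact key a
    have hbig' : {T | i + 2*n ≤ T} ∈ (U : Filter ℕ) := hbig
    have hne : ({T | i + 2*n ≤ T} ∩ ⋂ a ∈ Finset.range (i + 2*n),
        {T | AdjB.extf T (w T) a = α a}).Nonempty :=
      Filter.nonempty_of_mem (Filter.inter_mem hbig' hall)
    obtain ⟨T, hT1, hT2⟩ := hne
    have hT1' : i + 2*n ≤ T := hT1
    have hag : ∀ a, a < i + 2*n → AdjB.extf T (w T) a = α a := by
      intro a ha
      have := Set.mem_iInter₂.mp hT2 a (Finset.mem_range.mpr ha)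
      exact this
    have hfeq : (range n).filter (fun j => α (i+j) ≠ α (i+n+j))
        = (range n).filter (fun j => AdjB.extf T (w T) (i+j) ≠ AdjB.extf T (w T) (i+n+j)) := by
      apply filter_congr
      intro j hj
      simp only [Finset.mem_range] at hj
      rw [hag (i+j) (by omega), hag (i+n+j) (by omega)]
    rw [hfeq]
    exact hwspec T n i hNn hT1'
  · refine ⟨0, fun _ => false, ?_⟩
    intro n i _
    push_neg at hε2
    have h1 : (1/2 - ε : ℝ) ≤ 0 := by linarith
    have h2 : (1/2 - ε) * (n:ℝ) ≤ 0 := mul_nonpos_of_nonpos_of_nonneg h1 (Nat.cast_nonneg n)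
    calc (1/2 - ε) * (n:ℝ) ≤ 0 := h2
      _ ≤ _ := Nat.cast_nonneg _
end

section
/- Fix k ≥ 3 and set ε = 2^{-k}. Let t be a positive integer with 2^{m-2} < t ≤ 2^{m-1}. Then within any single dyadic interval of length 2^{-m}, at most 3 of its dyadic subintervals of length 2^{-(m+k-2)} contain a point whose distance to some rational with denominator t is at most ε/t. Equivalently, the set {x : d(tx, ℤ) ≤ 2^{-k}} meets at most 3 of the 2^{k-2} dyadic subintervals of level m+k-2 inside any fixed dyadic interval of level m. -/
set_option maxHeartbeats 1000000

/-- **At most 3 bad subintervals (Lemma on stripes).** Fix `k ≥ 3`, `ε = 2^{-k}`, and a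
positive integer `t` with `2^{m-2} < t ≤ 2^{m-1}`. Inside any dyadic interval
`[u/2^m, (u+1)/2^m]`, at most `3` of its `2^{k-2}` dyadic subintervals of level
`m + k - 2` contain a point `x` with `d(tx, ℤ) ≤ 2^{-k}`. -/
theorem at_most_three_bad_subintervals (k : ℕ) (hk : 3 ≤ k) (t : ℕ) (ht : 0 < t)
    (m : ℕ) (htlow : (2 : ℝ) ^ ((m : ℤ) - 2) < t) (hthigh : (t : ℝ) ≤ 2 ^ ((m : ℤ) - 1))
    (u : ℤ) :
    {s : ℕ | s < 2 ^ (k - 2) ∧ ∃ x : ℝ,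
        x ∈ Set.Icc (((u : ℝ) * 2 ^ (k - 2) + s) / 2 ^ (m + k - 2))
                    (((u : ℝ) * 2 ^ (k - 2) + s + 1) / 2 ^ (m + k - 2)) ∧
        ∃ z : ℤ, |(t : ℝ) * x - z| ≤ (2 : ℝ) ^ (-(k : ℤ))}.ncard ≤ 3 := by
  set Q : ℝ := 2 ^ (k - 2) with hQdef
  set P : ℝ := 2 ^ m with hPdef
  clear_value Q
  clear_value P
  have hQ0 : (0:ℝ) < Q := by rw [hQdef]; positivity
  have hP0 : (0:ℝ) < P := by rw [hPdef]; positivity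
  have hPQ : (0:ℝ) < P * Q := by positivity
  have hQ2 : (2:ℝ) ≤ Q := by
    rw [hQdef]
    calc (2:ℝ) = 2^1 := (pow_one 2).symm
    _ ≤ 2^(k-2) := by apply pow_le_pow_right₀ one_le_two; omega
  have hD : (2:ℝ)^(m + k - 2) = P * Q := by
    rw [show m + k - 2 = m + (k-2) by omega, pow_add, hPdef, hQdef]
  have hk4 : (2:ℝ)^k = 4 * Q := by
    rw [show k = k - 2 + 2 by omega, pow_add, hQdef]; ring
  have hε : (2:ℝ)^(-(k:ℤ)) = 1/(4*Q) := by
    rw [zpow_neg, zpow_natCast, hk4, one_div]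
  have hPm : (2:ℝ)^(m:ℤ) = P := by rw [zpow_natCast, hPdef]
  have htlow' : P/4 < (t:ℝ) := by
    have : (2:ℝ) ^ ((m : ℤ) - 2) = P/4 := by
      rw [zpow_sub₀ (by norm_num : (2:ℝ) ≠ 0), hPm]; norm_num
    linarith [htlow, this ▸ htlow]
  have hthigh' : (t:ℝ) ≤ P/2 := by
    have : (2:ℝ) ^ ((m : ℤ) - 1) = P/2 := by
      rw [zpow_sub₀ (by norm_num : (2:ℝ) ≠ 0), hPm]; norm_num
    linarith [this ▸ hthigh]
  have ht0 : (0:ℝ) < t := by exact_mod_cast ht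
  set S := {s : ℕ | s < 2 ^ (k - 2) ∧ ∃ x : ℝ,
        x ∈ Set.Icc (((u : ℝ) * Q + s) / 2 ^ (m + k - 2))
                    (((u : ℝ) * Q + s + 1) / 2 ^ (m + k - 2)) ∧
        ∃ z : ℤ, |(t : ℝ) * x - z| ≤ (2 : ℝ) ^ (-(k : ℤ))} with hSdef
  have key : ∀ s ∈ S, ∀ s' ∈ S, s ≤ s' → s' ≤ s + 2 := by
    intro s hs s' hs' hle
    obtain ⟨hslt, x, ⟨hx1, hx2⟩, z, hz⟩ := hs
    obtain ⟨hslt', x', ⟨hx1', hx2'⟩, z', hz'⟩ := hs'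
    rw [hD] at hx1 hx2 hx1' hx2'
    rw [hε, abs_le] at hz hz'
    obtain ⟨hza, hzb⟩ := hz
    obtain ⟨hza', hzb'⟩ := hz'
    rw [div_le_iff₀ hPQ] at hx1 hx1'
    rw [le_div_iff₀ hPQ] at hx2 hx2'
    have hsQ : (s:ℝ) + 1 ≤ Q := by
      have h1 : (s + 1 : ℕ) ≤ 2^(k-2) := hslt
      have := (Nat.cast_le (α := ℝ)).mpr h1
      push_cast at this; simpa [hQdef] using this
    have hsQ' : (s':ℝ) + 1 ≤ Q := by
      have h1 : (s' + 1 : ℕ) ≤ 2^(k-2) := hslt'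
      have := (Nat.cast_le (α := ℝ)).mpr h1
      push_cast at this; simpa [hQdef] using this
    have hs0 : (0:ℝ) ≤ s := Nat.cast_nonneg s
    have hs0' : (0:ℝ) ≤ s' := Nat.cast_nonneg s'
    -- x - x' and x' - x bounded by 1/P
    have hxx1 : (x - x') * (P * Q) ≤ Q := by rw [sub_mul]; linarith
    have hxx2 : (x' - x) * (P * Q) ≤ Q := by rw [sub_mul]; linarith
    have hd1 : x - x' ≤ 1/P := by
      rw [show (1:ℝ)/P = Q/(P*Q) by field_simp]
      rw [le_div_iff₀ hPQ]; linarith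
    have hd2 : x' - x ≤ 1/P := by
      rw [show (1:ℝ)/P = Q/(P*Q) by field_simp]
      rw [le_div_iff₀ hPQ]; linarith
    have htx1 : (t:ℝ)*x - (t:ℝ)*x' ≤ 1/2 := by
      have h1 : (t:ℝ)*(x - x') ≤ (t:ℝ)*(1/P) := by
        apply mul_le_mul_of_nonneg_left hd1 (le_of_lt ht0)
      rw [mul_sub] at h1
      have h2 : (t:ℝ)*(1/P) ≤ 1/2 := by
        rw [mul_one_div, div_le_iff₀ hP0]; linarith
      linarith
    have htx2 : (t:ℝ)*x' - (t:ℝ)*x ≤ 1/2 := by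
      have h1 : (t:ℝ)*(x' - x) ≤ (t:ℝ)*(1/P) := by
        apply mul_le_mul_of_nonneg_left hd2 (le_of_lt ht0)
      rw [mul_sub] at h1
      have h2 : (t:ℝ)*(1/P) ≤ 1/2 := by
        rw [mul_one_div, div_le_iff₀ hP0]; linarith
      linarith
    have hQi : 1/(4*Q) ≤ 1/8 := by
      rw [div_le_div_iff₀ (by positivity) (by norm_num)]; linarith
    have hzz : z = z' := by
      have h1 : ((z - z' : ℤ) : ℝ) < 1 := by push_cast; linarith
      have h2 : (-1 : ℝ) < ((z - z' : ℤ) : ℝ) := by push_cast; linarith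
      have h1' : (z - z' : ℤ) < 1 := by exact_mod_cast h1
      have h2' : (-1 : ℤ) < (z - z' : ℤ) := by exact_mod_cast h2
      omega
    subst hzz
    by_contra hcon
    push_neg at hcon
    have hs3 : (s:ℝ) + 3 ≤ (s':ℝ) := by
      have : s + 3 ≤ s' := by omega
      exact_mod_cast this
    have hdd : (2:ℝ) ≤ (x' - x) * (P * Q) := by rw [sub_mul]; linarith
    have hdpos : (0:ℝ) < x' - x := by nlinarith [hdd, hPQ]
    have htd : (t:ℝ)*x' - (t:ℝ)*x ≤ 1/(2*Q) := by
      have : 1/(4*Q) + 1/(4*Q) = 1/(2*Q) := by field_simp; ring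
      linarith
    -- contradiction: t*(x'-x) > (P/4)*(x'-x) ≥ (P/4)*(2/(P*Q)) = 1/(2Q)
    have hstep : (P/4) * (x' - x) < (t:ℝ) * (x' - x) :=
      mul_lt_mul_of_pos_right htlow' hdpos
    have hQ2' : (0:ℝ) < 2*Q := by positivity
    have hA : (P/4) * (x' - x) < 1/(2*Q) := by
      have h1 : (t:ℝ) * (x' - x) = (t:ℝ)*x' - (t:ℝ)*x := by ring
      linarith [h1 ▸ hstep]
    have hB : 1/(2*Q) ≤ (P/4) * (x' - x) := by
      rw [div_le_iff₀ hQ2']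
      nlinarith [hdd]
    linarith
  by_cases hne : S.Nonempty
  · set a := sInf S with hadef
    have ha : a ∈ S := Nat.sInf_mem hne
    have hsub : S ⊆ ({a, a+1, a+2} : Set ℕ) := by
      intro s hs
      have h1 : a ≤ s := Nat.sInf_le hs
      have h2 : s ≤ a + 2 := key a ha s hs h1
      simp only [Set.mem_insert_iff, Set.mem_singleton_iff]
      omega
    calc S.ncard ≤ ({a, a+1, a+2} : Set ℕ).ncard :=
          Set.ncard_le_ncard hsub (Set.toFinite _)
      _ ≤ ({a+1, a+2} : Set ℕ).ncard + 1 := Set.ncard_insert_le _ _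
      _ ≤ (({a+2} : Set ℕ).ncard + 1) + 1 := by
          gcongr; exact Set.ncard_insert_le _ _
      _ ≤ 3 := by rw [Set.ncard_singleton]
  · rw [Set.not_nonempty_iff_eq_empty] at hne
    rw [hne, Set.ncard_empty]
    omega
end

section
/- Let S ⊆ {0,1}^* be a set of binary strings such that |S ∩ {0,1}^n| ≤ 2^{0.99n} for all n. Then there exist a constant c and an infinite binary sequence α such that no factor of α of length greater than c belongs to S. -/
open Finset

/-- `w` is good: no infix of length `> c` is in `S`. -/
def Good (S : Set (List Bool)) (c : ℕ) (w : List Bool) : Prop :=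
  ∀ v : List Bool, v <:+: w → c < v.length → v ∉ S

lemma Good.of_infix {S c} {u w : List Bool} (h : u <:+: w) (hw : Good S c w) :
    Good S c u := fun v hv => hw v (hv.trans h)

lemma good_of_short {S c} {w : List Bool} (h : w.length ≤ c) : Good S c w := by
  intro v hv hlen
  exact absurd (hv.length_le.trans h) (by omega)

/-- all binary strings of length `n` as a Finset -/
def allB (n : ℕ) : Finset (List Bool) :=
  (Finset.univ : Finset (Fin n → Bool)).image List.ofFn

lemma mem_allB {n : ℕ} {w : List Bool} : w ∈ allB n ↔ w.length = n := by
  constructor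
  · intro h
    simp only [allB, mem_image, mem_univ, true_and] at h
    obtain ⟨f, rfl⟩ := h
    simp
  · intro h
    subst h
    simp only [allB, mem_image, mem_univ, true_and]
    exact ⟨w.get, List.ofFn_get w⟩

open Classical in
noncomputable def GF (S : Set (List Bool)) (c n : ℕ) : Finset (List Bool) :=
  (allB n).filter (Good S c)

open Classical in
noncomputable def SFn (S : Set (List Bool)) (n : ℕ) : Finset (List Bool) :=
  (allB n).filter (· ∈ S)

lemma mem_GF {S c n w} : w ∈ GF S c n ↔ w.length = n ∧ Good S c w := by
  classical simp [GF, mem_allB, Finset.mem_filter]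

lemma mem_SFn {S n w} : w ∈ SFn S n ↔ w.length = n ∧ w ∈ S := by
  classical simp [SFn, mem_allB, Finset.mem_filter]

lemma GF_zero (S c) : GF S c 0 = {[]} := by
  ext w
  simp only [mem_GF, Finset.mem_singleton, List.length_eq_zero_iff]
  constructor
  · rintro ⟨rfl, -⟩; rfl
  · rintro rfl; exact ⟨rfl, good_of_short (by simp)⟩

lemma SFn_coe (S n) : ((SFn S n : Set (List Bool))) = {x ∈ S | x.length = n} := by
  ext x; simp [mem_SFn]; tauto

lemma key (S : Set (List Bool)) (c L : ℕ) (hc : 1 ≤ c) :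
    2 * (GF S c L).card ≤ (GF S c (L+1)).card
      + ∑ n ∈ Finset.Icc (c+1) (L+1), (GF S c (L+1-n)).card * (SFn S n).card := by
  classical
  set X : Finset (List Bool) :=
    ((GF S c L) ×ˢ (Finset.univ : Finset Bool)).image (fun p => p.1 ++ [p.2]) with hX
  have hinj : Set.InjOn (fun p : List Bool × Bool => p.1 ++ [p.2])
      ↑((GF S c L) ×ˢ (Finset.univ : Finset Bool)) := by
    intro p _ q _ h
    simp only at h
    have h1 : p.1 = q.1 := by
      have := congrArg List.dropLast h
      simpa using this
    have h2 : p.2 = q.2 := by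
      have := congrArg (fun l => List.getLast? l) h
      simpa using this
    exact Prod.ext h1 h2
  have hcardX : X.card = 2 * (GF S c L).card := by
    rw [hX, Finset.card_image_of_injOn hinj, Finset.card_product]
    simp [mul_comm]
  -- the bad sets
  set Bad : Finset (List Bool) := (Finset.Icc (c+1) (L+1)).biUnion
    (fun n => ((GF S c (L+1-n)) ×ˢ (SFn S n)).image (fun p => p.1 ++ p.2)) with hBad
  have hsub : X ⊆ GF S c (L+1) ∪ Bad := by
    intro x hx
    rw [hX, Finset.mem_image] at hx
    obtain ⟨⟨w, b⟩, hwb, rfl⟩ := hx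
    rw [Finset.mem_product] at hwb
    obtain ⟨hw, -⟩ := hwb
    rw [mem_GF] at hw
    obtain ⟨hwlen, hwgood⟩ := hw
    have hxlen : (w ++ [b]).length = L + 1 := by simp [hwlen]
    by_cases hgood : Good S c (w ++ [b])
    · exact Finset.mem_union_left _ (mem_GF.mpr ⟨hxlen, hgood⟩)
    · refine Finset.mem_union_right _ ?_
      simp only [Good, not_forall] at hgood
      obtain ⟨v, hvinf, hvlen, hvS⟩ := hgood
      rw [not_not] at hvS
      -- show v is a suffix of w ++ [b]
      obtain ⟨s, t, hst⟩ := hvinf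
      have ht : t = [] := by
        by_contra ht
        -- then s ++ v is a prefix of w
        have hpre : s ++ v <+: w := by
          have hlen : (s ++ v).length ≤ w.length := by
            have htl : 0 < t.length := List.length_pos_iff.mpr ht
            have hl := congrArg List.length hst
            have hw' : w.length = L := hwlen
            simp only [List.length_append, List.length_cons, List.length_nil] at hl
            simp only [List.length_append]
            omega
          have h1 : s ++ v <+: w ++ [b] := ⟨t, by rw [← hst]⟩
          exact List.prefix_of_prefix_length_le h1 (List.prefix_append w [b])
            (by simpa [hwlen] using hlen)
        exact hwgood v ((List.suffix_append s v).isInfix.trans hpre.isInfix) hvlen hvS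
      subst ht
      rw [List.append_nil] at hst
      set n := v.length with hn
      have hnmem : n ∈ Finset.Icc (c+1) (L+1) := by
        rw [Finset.mem_Icc]
        have : (s ++ v).length = L + 1 := by rw [hst]; exact hxlen
        simp at this
        omega
      have hslen : s.length = L + 1 - n := by
        have : (s ++ v).length = L + 1 := by rw [hst]; exact hxlen
        simp at this
        omega
      have hsw : s <+: w := by
        refine List.prefix_of_prefix_length_le ⟨v, hst⟩ (List.prefix_append w [b]) ?_
        have h1 : 1 ≤ n ∧ n ≤ L + 1 := by rw [Finset.mem_Icc] at hnmem; omega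
        have hw' : w.length = L := hwlen
        omega
      have hsgood : Good S c s := Good.of_infix hsw.isInfix hwgood
      rw [hBad, Finset.mem_biUnion]
      refine ⟨n, hnmem, ?_⟩
      rw [Finset.mem_image]
      refine ⟨(s, v), ?_, hst⟩
      rw [Finset.mem_product]
      exact ⟨mem_GF.mpr ⟨hslen, hsgood⟩, mem_SFn.mpr ⟨rfl, hvS⟩⟩
  calc 2 * (GF S c L).card = X.card := hcardX.symm
    _ ≤ (GF S c (L+1) ∪ Bad).card := Finset.card_le_card hsub
    _ ≤ (GF S c (L+1)).card + Bad.card := Finset.card_union_le _ _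
    _ ≤ (GF S c (L+1)).card
        + ∑ n ∈ Finset.Icc (c+1) (L+1), (GF S c (L+1-n)).card * (SFn S n).card := by
      gcongr
      refine (Finset.card_biUnion_le).trans (Finset.sum_le_sum ?_)
      intro n _
      exact (Finset.card_image_le).trans (le_of_eq (Finset.card_product _ _))

lemma num1 : (2:ℝ) ^ ((0.99:ℝ)) ≤ 1987/1000 := by
  have h100 : ((2:ℝ) ^ ((0.99:ℝ))) ^ (100:ℕ) = 2 ^ (99:ℕ) := by
    rw [← Real.rpow_natCast ((2:ℝ) ^ ((0.99:ℝ))) 100, ← Real.rpow_mul (by norm_num)]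
    norm_num
  refine le_of_pow_le_pow_left₀ (n := 100) (by norm_num) (by norm_num) ?_
  rw [h100]; norm_num

lemma num2 : ((1987:ℝ)/1990) ^ (500:ℕ) ≤ 1/2 := by
  have h : ((1987:ℝ)/1990) ^ (250:ℕ) ≤ 7/10 := by norm_num
  rw [show (500:ℕ) = 250 * 2 from rfl, pow_mul]
  calc (((1987:ℝ)/1990) ^ (250:ℕ)) ^ 2 ≤ (7/10) ^ 2 := pow_le_pow_left₀ (by positivity) h 2
    _ ≤ 1/2 := by norm_num

lemma master : (199/100:ℝ) * (((1987:ℝ)/1990)^(9000:ℕ) / (1 - 1987/1990)) ≤ 2 - 199/100 := by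
  have h : ((1987:ℝ)/1990)^(9000:ℕ) ≤ (1/2:ℝ)^(18:ℕ) := by
    rw [show (9000:ℕ) = 500 * 18 from rfl, pow_mul]
    exact pow_le_pow_left₀ (by positivity) num2 18
  have h2 : (199/100:ℝ) * ((1/2:ℝ)^(18:ℕ) / (1 - 1987/1990)) ≤ 2 - 199/100 := by norm_num
  refine le_trans ?_ h2
  gcongr

lemma sBound (S : Set (List Bool))
    (hS : ∀ n : ℕ, (({x ∈ S | x.length = n} : Set (List Bool)).ncard : ℝ)
      ≤ (2 : ℝ) ^ ((0.99 : ℝ) * n)) (n : ℕ) :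
    ((SFn S n).card : ℝ) ≤ ((1987:ℝ)/1000) ^ n := by
  have h1 : ((SFn S n).card : ℝ) = (({x ∈ S | x.length = n} : Set (List Bool)).ncard : ℝ) := by
    rw [← SFn_coe S n, Set.ncard_coe_finset]
  rw [h1]
  refine (hS n).trans ?_
  have h2 : (2:ℝ) ^ ((0.99:ℝ) * n) = ((2:ℝ) ^ ((0.99:ℝ))) ^ n := by
    rw [← Real.rpow_natCast ((2:ℝ) ^ ((0.99:ℝ))) n, ← Real.rpow_mul (by norm_num)]
  rw [h2]
  exact pow_le_pow_left₀ (Real.rpow_nonneg (by norm_num) _) num1 n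

lemma geo (L : ℕ) : ∑ n ∈ Finset.Icc 9000 (L+1), ((1987:ℝ)/1990)^n
    ≤ ((1987:ℝ)/1990)^(9000:ℕ) / (1 - 1987/1990) := by
  by_cases hL : L + 1 < 9000
  · rw [Finset.Icc_eq_empty (by omega), Finset.sum_empty]
    positivity
  · push_neg at hL
    rw [show Finset.Icc 9000 (L+1) = Finset.Ico 9000 (L+2) by rfl]
    rw [geom_sum_Ico (by norm_num) (by omega)]
    have heq : (((1987:ℝ)/1990)^(L+2) - ((1987:ℝ)/1990)^9000) / ((1987:ℝ)/1990 - 1)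
        = (((1987:ℝ)/1990)^9000 - ((1987:ℝ)/1990)^(L+2)) / (1 - (1987:ℝ)/1990) := by
      rw [← neg_sub (((1987:ℝ)/1990)^9000), ← neg_sub (1:ℝ), neg_div_neg_eq]
    rw [heq]
    gcongr
    have : (0:ℝ) ≤ ((1987:ℝ)/1990)^(L+2) := by positivity
    linarith

lemma growth (S : Set (List Bool))
    (hS : ∀ n : ℕ, (({x ∈ S | x.length = n} : Set (List Bool)).ncard : ℝ)
      ≤ (2 : ℝ) ^ ((0.99 : ℝ) * n)) :
    ∀ L : ℕ, (199/100:ℝ) * ((GF S 8999 L).card : ℝ) ≤ ((GF S 8999 (L+1)).card : ℝ) := by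
  set β : ℝ := 199/100 with hβ
  set γ : ℝ := 1987/1000 with hγ
  set r : ℝ := 1987/1990 with hr
  have hβpos : (0:ℝ) < β := by norm_num
  intro L
  induction L using Nat.strong_induction_on with
  | _ L IH =>
  set F : ℕ → ℝ := fun k => ((GF S 8999 k).card : ℝ) with hF
  have hFnn : ∀ k, 0 ≤ F k := fun k => Nat.cast_nonneg _
  have hmono : ∀ d m : ℕ, m + d = L → F m * β ^ d ≤ F L := by
    intro d
    induction d with
    | zero => intro m hm; simp [show m = L from hm]
    | succ d ih =>
      intro m hm
      have h1 : β * F m ≤ F (m+1) := IH m (by omega)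
      calc F m * β ^ (d+1) = (β * F m) * β ^ d := by ring
        _ ≤ F (m+1) * β ^ d := by
            apply mul_le_mul_of_nonneg_right h1 (by positivity)
        _ ≤ F L := ih (m+1) (by omega)
  have hkeyR : 2 * F L ≤ F (L+1)
      + ∑ n ∈ Finset.Icc 9000 (L+1), F (L+1-n) * ((SFn S n).card : ℝ) := by
    have := key S 8999 L (by norm_num)
    have hcast : ((2 * (GF S 8999 L).card : ℕ) : ℝ)
        ≤ (((GF S 8999 (L+1)).card
          + ∑ n ∈ Finset.Icc 9000 (L+1), (GF S 8999 (L+1-n)).card * (SFn S n).card : ℕ) : ℝ) := by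
      exact_mod_cast this
    push_cast at hcast
    exact hcast
  have hterm : ∀ n ∈ Finset.Icc 9000 (L+1),
      F (L+1-n) * ((SFn S n).card : ℝ) ≤ (β * r ^ n) * F L := by
    intro n hn
    rw [Finset.mem_Icc] at hn
    have hm : (L + 1 - n) + (n - 1) = L := by omega
    have h1 : F (L+1-n) * β ^ (n-1) ≤ F L := hmono (n-1) (L+1-n) hm
    have h2 : (β * r ^ n) * β ^ (n-1) = γ ^ n := by
      have hn1 : n - 1 + 1 = n := by omega
      have hb : β * β ^ (n-1) = β ^ n := by rw [← pow_succ' β (n-1), hn1]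
      calc (β * r ^ n) * β ^ (n-1) = r ^ n * (β * β ^ (n-1)) := by ring
        _ = r ^ n * β ^ n := by rw [hb]
        _ = γ ^ n := by rw [← mul_pow]; norm_num [hr, hβ, hγ]
    calc F (L+1-n) * ((SFn S n).card : ℝ)
        ≤ F (L+1-n) * γ ^ n := by
          apply mul_le_mul_of_nonneg_left (sBound S hS n) (hFnn _)
      _ = (β * r ^ n) * (F (L+1-n) * β ^ (n-1)) := by rw [← h2]; ring
      _ ≤ (β * r ^ n) * F L := by
          apply mul_le_mul_of_nonneg_left h1 (by positivity)
  have hsum : ∑ n ∈ Finset.Icc 9000 (L+1), F (L+1-n) * ((SFn S n).card : ℝ)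
      ≤ (2 - β) * F L := by
    calc ∑ n ∈ Finset.Icc 9000 (L+1), F (L+1-n) * ((SFn S n).card : ℝ)
        ≤ ∑ n ∈ Finset.Icc 9000 (L+1), (β * r ^ n) * F L := Finset.sum_le_sum hterm
      _ = (β * ∑ n ∈ Finset.Icc 9000 (L+1), r ^ n) * F L := by
          rw [Finset.mul_sum, Finset.sum_mul]
      _ ≤ (β * (r ^ (9000:ℕ) / (1 - r))) * F L := by
          apply mul_le_mul_of_nonneg_right _ (hFnn L)
          exact mul_le_mul_of_nonneg_left (geo L) hβpos.le
      _ ≤ (2 - β) * F L := mul_le_mul_of_nonneg_right master (hFnn L)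
  linarith


def QQ (Gd : List Bool → Prop) (w : List Bool) : Prop :=
  ∀ L : ℕ, ∃ v, Gd v ∧ w <+: v ∧ v.length = w.length + L

lemma qq_step (Gd : List Bool → Prop)
    (hpref : ∀ {w v : List Bool}, w <+: v → Gd v → Gd w)
    {w : List Bool} (hw : QQ Gd w) : ∃ b, QQ Gd (w ++ [b]) := by
  by_contra h
  push_neg at h
  have h' : ∀ b : Bool, ∃ L : ℕ, ∀ v, Gd v → (w ++ [b]) <+: v →
      v.length ≠ (w ++ [b]).length + L := by
    intro b
    have hb := h b
    rw [QQ] at hb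
    push_neg at hb
    obtain ⟨L, hL⟩ := hb
    exact ⟨L, fun v hv hp => hL v hv hp⟩
  obtain ⟨L0, hL0⟩ := h' false
  obtain ⟨L1, hL1⟩ := h' true
  set L := max L0 L1 + 1 with hLdef
  obtain ⟨v, hvG, hvp, hvlen⟩ := hw L
  obtain ⟨u, rfl⟩ := hvp
  have hu : u.length = L := by
    rw [List.length_append] at hvlen; omega
  have hune : u ≠ [] := by
    intro h0; rw [h0] at hu; simp at hu
  obtain ⟨b, rest, rfl⟩ := List.exists_cons_of_ne_nil hune
  have hrest : rest.length = L - 1 := by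
    simp at hu; omega
  have main : ∀ Lb : ℕ, Lb < L →
      (∀ v', Gd v' → (w ++ [b]) <+: v' → v'.length ≠ (w ++ [b]).length + Lb) → False := by
    intro Lb hLbL hno
    set v' := (w ++ b :: rest).take (w.length + 1 + Lb) with hv'
    have hv'len : v'.length = w.length + 1 + Lb := by
      rw [hv', List.length_take, List.length_append, List.length_cons]
      omega
    have hv'G : Gd v' := hpref (List.take_prefix _ _) hvG
    have hwbv : (w ++ [b]) <+: (w ++ b :: rest) := ⟨rest, by simp⟩
    have hwbv' : (w ++ [b]) <+: v' :=
      List.prefix_of_prefix_length_le hwbv (List.take_prefix _ _)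
        (by rw [hv'len]; simp)
    exact hno v' hv'G hwbv' (by rw [hv'len]; simp)
  cases b with
  | false => exact main L0 (by omega) hL0
  | true => exact main L1 (by omega) hL1

lemma koenig (Gd : List Bool → Prop)
    (hpref : ∀ {w v : List Bool}, w <+: v → Gd v → Gd w)
    (hex : ∀ L : ℕ, ∃ v, Gd v ∧ v.length = L) :
    ∃ α : ℕ → Bool, ∀ n : ℕ, Gd (List.ofFn fun j : Fin n => α j) := by
  have Qnil : QQ Gd [] := by
    intro L
    obtain ⟨v, hv, hlen⟩ := hex L
    exact ⟨v, hv, List.nil_prefix, by simpa using hlen⟩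
  choose pick hpick using fun (w : List Bool) (h : QQ Gd w) => qq_step Gd hpref h
  let ws : ℕ → {w : List Bool // QQ Gd w} := fun k =>
    Nat.rec ⟨[], Qnil⟩ (fun _ p => ⟨p.1 ++ [pick p.1 p.2], hpick p.1 p.2⟩) k
  have hws_succ : ∀ k, (ws (k+1)).1 = (ws k).1 ++ [pick (ws k).1 (ws k).2] := fun k => rfl
  have hlen : ∀ k, (ws k).1.length = k := by
    intro k
    induction k with
    | zero => rfl
    | succ k ih => rw [hws_succ]; simp [ih]
  have hmono : ∀ k m : ℕ, k ≤ m → (ws k).1 <+: (ws m).1 := by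
    intro k m hkm
    induction m with
    | zero => rw [Nat.le_zero] at hkm; subst hkm; exact List.prefix_refl _
    | succ m ih =>
      rcases Nat.lt_or_ge k (m+1) with h | h
      · refine (ih (by omega)).trans ?_
        rw [hws_succ]
        exact ⟨_, rfl⟩
      · have : k = m + 1 := by omega
        subst this; exact List.prefix_refl _
  set α : ℕ → Bool := fun i => (ws (i+1)).1.getD i false with hα
  refine ⟨α, ?_⟩
  have hofn : ∀ n : ℕ, (List.ofFn fun j : Fin n => α j) = (ws n).1 := by
    intro n
    apply List.ext_getElem
    · simp [hlen]
    · intro j h1 h2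
      simp only [List.getElem_ofFn]
      rw [hα]
      simp only []
      have hj : j < (ws (j+1)).1.length := by have := hlen (j+1); omega
      rw [List.getD_eq_getElem _ _ hj]
      have hpre := hmono (j+1) n (by have h3 := hlen n; omega)
      exact hpre.getElem hj
  intro n
  rw [hofn]
  obtain ⟨v, hvG, hvp, hvlen⟩ := (ws n).2 0
  have : (ws n).1 = v := List.IsPrefix.eq_of_length hvp (by omega)
  rw [this]
  exact hvG


lemma GF_pos (S : Set (List Bool))
    (hS : ∀ n : ℕ, (({x ∈ S | x.length = n} : Set (List Bool)).ncard : ℝ)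
      ≤ (2 : ℝ) ^ ((0.99 : ℝ) * n)) :
    ∀ L : ℕ, 0 < (GF S 8999 L).card := by
  intro L
  induction L with
  | zero => rw [GF_zero]; simp
  | succ L ih =>
    have h := growth S hS L
    have h0 : (0:ℝ) < ((GF S 8999 L).card : ℝ) := by exact_mod_cast ih
    have : (0:ℝ) < ((GF S 8999 (L+1)).card : ℝ) := lt_of_lt_of_le (by positivity) h
    exact_mod_cast this

/-- **Levin's everywhere-complex sequences, combinatorial form.** If `S` is a set of
binary strings containing at most `2^{0.99 n}` strings of each length `n`, then there
are a constant `c` and an infinite binary sequence `α` none of whose factors of length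
greater than `c` belongs to `S`. -/
theorem everywhere_complex_sequence (S : Set (List Bool))
    (hS : ∀ n : ℕ, (({x ∈ S | x.length = n} : Set (List Bool)).ncard : ℝ)
      ≤ (2 : ℝ) ^ ((0.99 : ℝ) * n)) :
    ∃ c : ℕ, ∃ α : ℕ → Bool, ∀ i n : ℕ, c < n →
      (List.ofFn fun j : Fin n => α (i + j)) ∉ S := by
  refine ⟨8999, ?_⟩
  have hex : ∀ L : ℕ, ∃ v, Good S 8999 v ∧ v.length = L := by
    intro L
    obtain ⟨v, hv⟩ := Finset.card_pos.mp (GF_pos S hS L)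
    rw [mem_GF] at hv
    exact ⟨v, hv.2, hv.1⟩
  obtain ⟨α, hα⟩ := koenig (Good S 8999)
    (fun hwv hv => Good.of_infix hwv.isInfix hv) hex
  refine ⟨α, ?_⟩
  intro i n hn hmem
  have hp := hα (i + n)
  set p := List.ofFn fun j : Fin (i+n) => α j with hpdef
  have heq : (List.ofFn fun j : Fin n => α (i + j)) = p.drop i := by
    apply List.ext_getElem
    · simp [hpdef]
    · intro j h1 h2
      simp [hpdef]
  have hinf : (List.ofFn fun j : Fin n => α (i + j)) <:+: p := by
    rw [heq]
    exact (List.drop_suffix i p).isInfix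
  exact hp _ hinf (by simpa using hn) hmem
end
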